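/- arXiv:0901.4858 — 6 statements merged into one kernel-verified Lean document; each statement's English description precedes it below -/
import Mathlib

section
/- Every locally finite graph (every vertex has finite degree) admits an unfriendly partition. -/
open Cardinal

/-- A vertex `x` is happy in the two-colouring `π` of `G` if it has at least as many
neighbours in the opposite class as in its own class (as cardinals). -/
def Happy {V : Type*} (G : SimpleGraph V) (π : V → Bool) (x : V) : Prop :=
  #{y : V | G.Adj x y ∧ π y = π x} ≤ #{y : V | G.Adj x y ∧ π y ≠ π x}

/-- A two-colouring is unfriendly if every vertex is happy in it. -/
def Unfriendly {V : Type*} (G : SimpleGraph V) (π : V → Bool) : Prop :=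
  ∀ x : V, Happy G π x

lemma happy_iff_card {V : Type*} (G : SimpleGraph V)
    (hlf : ∀ v : V, (G.neighborSet v).Finite) (π : V → Bool) (x : V) :
    Happy G π x ↔
      ((hlf x).toFinset.filter (fun y => π y = π x)).card ≤
        ((hlf x).toFinset.filter (fun y => π y ≠ π x)).card := by
  classical
  have h1 : {y : V | G.Adj x y ∧ π y = π x}
      = (((hlf x).toFinset.filter (fun y => π y = π x) : Finset V) : Set V) := by
    ext y; simp [Set.Finite.mem_toFinset]
  have h2 : {y : V | G.Adj x y ∧ π y ≠ π x}
      = (((hlf x).toFinset.filter (fun y => π y ≠ π x) : Finset V) : Set V) := by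
    ext y; simp [Set.Finite.mem_toFinset]
  rw [Happy, h1, h2]
  simp only [Finset.coe_sort_coe, Cardinal.mk_coe_finset, Nat.cast_le]

lemma exists_partial {V : Type*} (G : SimpleGraph V)
    (hlf : ∀ v : V, (G.neighborSet v).Finite) (F : Finset V) :
    ∃ π : V → Bool, ∀ x ∈ F, Happy G π x := by
  classical
  set Nf : V → Finset V := fun v => (hlf v).toFinset with hNfdef
  have hmemNf : ∀ v y : V, y ∈ Nf v ↔ G.Adj v y := by
    intro v y; simp [Nf, Set.Finite.mem_toFinset]
  set W : Finset V := F ∪ F.biUnion Nf with hWdef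
  have hFW : F ⊆ W := Finset.subset_union_left
  have hNW : ∀ x ∈ F, Nf x ⊆ W := fun x hx =>
    (Finset.subset_biUnion_of_mem Nf hx).trans Finset.subset_union_right
  let ext : ({v // v ∈ W} → Bool) → V → Bool :=
    fun σ v => if h : v ∈ W then σ ⟨v, h⟩ else false
  let c : (V → Bool) → V → V → ℤ := fun p y z => if p z ≠ p y then 1 else 0
  let Fc : ({v // v ∈ W} → Bool) → ℤ := fun σ => ∑ y ∈ W, ∑ z ∈ Nf y, c (ext σ) y z
  obtain ⟨σ, hσ⟩ : ∃ σ, ∀ τ, Fc τ ≤ Fc σ := Finite.exists_max Fc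
  refine ⟨ext σ, fun x hxF => ?_⟩
  set π : V → Bool := ext σ with hπdef
  by_contra hbad
  rw [happy_iff_card G hlf] at hbad
  push_neg at hbad
  have hxW : x ∈ W := hFW hxF
  set σ' : {v // v ∈ W} → Bool := Function.update σ ⟨x, hxW⟩ (!(σ ⟨x, hxW⟩)) with hσ'def
  set π' : V → Bool := ext σ' with hπ'def
  have hπ'x : π' x = !(π x) := by
    simp only [hπ'def, hπdef, ext, hxW, dif_pos, hσ'def, Function.update_self]
  have hπ'v : ∀ v, v ≠ x → π' v = π v := by
    intro v hv
    by_cases hvW : v ∈ W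
    · simp only [hπ'def, hπdef, ext, hvW, dif_pos, hσ'def]
      rw [Function.update_of_ne (fun h => hv (congrArg Subtype.val h))]
    · simp only [hπ'def, hπdef, ext, hvW, dif_neg, not_false_iff]
  -- basic facts about c
  have hcsymm : ∀ (p : V → Bool) y z, c p y z = c p z y := by
    intro p y z
    simp only [c]
    by_cases h : p z = p y
    · rw [if_neg (fun hh => hh h), if_neg (fun hh => hh h.symm)]
    · rw [if_pos h, if_pos (fun hh : p y = p z => h hh.symm)]
  have hsame : ∀ y z, y ≠ x → z ≠ x → c π' y z = c π y z := by
    intro y z hy hz; simp only [c, hπ'v y hy, hπ'v z hz]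
  have hflipx : ∀ z, z ≠ x → c π' x z = 1 - c π x z := by
    intro z hz
    simp only [c, hπ'x, hπ'v z hz]
    cases π x <;> cases π z <;> simp
  have hflipy : ∀ y, y ≠ x → c π' y x = 1 - c π y x := by
    intro y hy
    simp only [c, hπ'x, hπ'v y hy]
    cases π x <;> cases π y <;> simp
  have hnotself : ∀ v, v ∉ Nf v := fun v h => G.irrefl ((hmemNf v v).1 h)
  have hneA : ∀ z, z ∈ Nf x → z ≠ x := by
    intro z hz h; subst h; exact hnotself z hz
  -- row computation
  have hrowx : ∑ z ∈ Nf x, c π' x z = ∑ z ∈ Nf x, (1 - c π x z) :=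
    Finset.sum_congr rfl fun z hz => hflipx z (hneA z hz)
  have hrow : ∀ y ∈ W.erase x,
      ((∑ z ∈ Nf y, c π' y z) - ∑ z ∈ Nf y, c π y z)
        = if x ∈ Nf y then 1 - 2 * c π y x else 0 := by
    intro y hy
    have hyx : y ≠ x := Finset.ne_of_mem_erase hy
    rw [← Finset.sum_sub_distrib]
    have hterm : ∀ z ∈ Nf y, c π' y z - c π y z
        = if z = x then 1 - 2 * c π y x else 0 := by
      intro z hz
      by_cases hzx : z = x
      · subst hzx; rw [hflipy y hyx]; simp; ring
      · rw [hsame y z hyx hzx]; simp [hzx]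
    rw [Finset.sum_congr rfl hterm, Finset.sum_ite_eq' (Nf y) x fun _ => 1 - 2 * c π y x]
  -- filter identity
  have hfilt : (W.erase x).filter (fun y => x ∈ Nf y) = Nf x := by
    ext y
    simp only [Finset.mem_filter, Finset.mem_erase, hmemNf]
    constructor
    · rintro ⟨⟨-, -⟩, hadj⟩; exact hadj.symm
    · intro hadj
      exact ⟨⟨hadj.ne', hNW x hxF ((hmemNf x y).2 hadj)⟩, hadj.symm⟩
  -- key difference computation
  have key : Fc σ' - Fc σ = 2 * ∑ z ∈ Nf x, (1 - 2 * c π x z) := by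
    have h1 : Fc σ' - Fc σ
        = ∑ y ∈ W, ((∑ z ∈ Nf y, c π' y z) - ∑ z ∈ Nf y, c π y z) := by
      rw [Finset.sum_sub_distrib]
    rw [h1, ← Finset.add_sum_erase _ _ hxW, Finset.sum_congr rfl hrow]
    have h2 : ((∑ z ∈ Nf x, c π' x z) - ∑ z ∈ Nf x, c π x z)
        = ∑ z ∈ Nf x, (1 - 2 * c π x z) := by
      rw [hrowx, ← Finset.sum_sub_distrib]
      exact Finset.sum_congr rfl fun z _ => by ring
    have h3 : (∑ y ∈ W.erase x, if x ∈ Nf y then 1 - 2 * c π y x else 0)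
        = ∑ z ∈ Nf x, (1 - 2 * c π x z) := by
      rw [← Finset.sum_filter, hfilt]
      exact Finset.sum_congr rfl fun z _ => by rw [hcsymm]
    rw [h2, h3]; ring
  -- positivity of the gain
  have hD : ∑ z ∈ Nf x, c π x z = (((Nf x).filter (fun z => π z ≠ π x)).card : ℤ) := by
    simp only [c]
    rw [Finset.sum_boole]
  have hbad' : ((Nf x).filter (fun y => π y ≠ π x)).card
      < ((Nf x).filter (fun y => π y = π x)).card := hbad
  have hcards : ((Nf x).filter (fun z => π z = π x)).card
      + ((Nf x).filter (fun z => π z ≠ π x)).card = (Nf x).card := by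
    simpa using Finset.card_filter_add_card_filter_not
      (s := Nf x) (p := fun z => π z = π x)
  have hge : (1:ℤ) ≤ ∑ z ∈ Nf x, (1 - 2 * c π x z) := by
    rw [Finset.sum_sub_distrib, Finset.sum_const, nsmul_eq_mul, mul_one,
      ← Finset.mul_sum, hD]
    omega
  linarith [hσ σ', key, hge]

/-- Every locally finite graph admits an unfriendly partition. -/
theorem locallyFinite_unfriendly {V : Type*} (G : SimpleGraph V)
    (hlf : ∀ v : V, (G.neighborSet v).Finite) :
    ∃ π : V → Bool, Unfriendly G π := by
  classical
  choose p hp using fun S : Finset V => exists_partial G hlf S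
  haveI : Nonempty (Finset V) := ⟨∅⟩
  set U : Ultrafilter (Finset V) := Ultrafilter.of Filter.atTop with hUdef
  have hUle : (U : Filter (Finset V)) ≤ Filter.atTop := Ultrafilter.of_le _
  set π : V → Bool :=
    fun v => if {S : Finset V | p S v = true} ∈ U then true else false with hπdef
  have hA : ∀ v, {S : Finset V | p S v = π v} ∈ U := by
    intro v
    by_cases h : {S : Finset V | p S v = true} ∈ U
    · have hv : π v = true := by simp [hπdef, h]
      rw [hv]; exact h
    · have hv : π v = false := by simp [hπdef, h]
      rw [hv]
      have hc : {S : Finset V | p S v = true}ᶜ ∈ U :=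
        (Ultrafilter.compl_mem_iff_notMem).2 h
      have : {S : Finset V | p S v = false} = {S : Finset V | p S v = true}ᶜ := by
        ext S; simp
      rw [this]; exact hc
  refine ⟨π, fun x => ?_⟩
  set K : Finset V := insert x (hlf x).toFinset with hKdef
  have hB : {S : Finset V | K ≤ S} ∈ U := hUle (Filter.mem_atTop K)
  have hA' : {S : Finset V | ∀ v ∈ K, p S v = π v} ∈ U := by
    have he : {S : Finset V | ∀ v ∈ K, p S v = π v}
        = ⋂ v ∈ K, {S : Finset V | p S v = π v} := by
      ext S; simp
    rw [he]
    exact (Filter.biInter_finset_mem K).2 fun v _ => hA v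
  obtain ⟨S, hS⟩ := Filter.nonempty_of_mem (Filter.inter_mem hB hA')
  have hxK : x ∈ K := Finset.mem_insert_self _ _
  have hx : Happy G (p S) x := hp S x (hS.1 hxK)
  have hsame : ∀ v ∈ K, π v = p S v := fun v hv => (hS.2 v hv).symm
  have e1 : {y : V | G.Adj x y ∧ π y = π x} = {y : V | G.Adj x y ∧ p S y = p S x} := by
    ext y
    simp only [Set.mem_setOf_eq, and_congr_right_iff]
    intro hadj
    rw [hsame y (Finset.mem_insert_of_mem ((hlf x).mem_toFinset.2 hadj)), hsame x hxK]
  have e2 : {y : V | G.Adj x y ∧ π y ≠ π x} = {y : V | G.Adj x y ∧ p S y ≠ p S x} := by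
    ext y
    simp only [Set.mem_setOf_eq, and_congr_right_iff]
    intro hadj
    rw [hsame y (Finset.mem_insert_of_mem ((hlf x).mem_toFinset.2 hadj)), hsame x hxK]
  rw [Happy, e1, e2]
  exact hx
end

section
/- Every countable graph in which all but finitely many vertices have infinite degree admits an unfriendly partition. -/
open Cardinal

/-- In a countable ambient type, given countably many infinite sets, there is a
two-colouring meeting each set infinitely in both colours. -/
lemma exists_balanced {V : Type*} [Countable V] {I : Type*} [Countable I]
    (A : I → Set V) (hA : ∀ i, (A i).Infinite) :
    ∃ τ : V → Bool, ∀ i c, {y ∈ A i | τ y = c}.Infinite := by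
  classical
  let D := I × Bool × ℕ
  obtain ⟨ι, hι⟩ := exists_injective_nat D
  -- a choice of a fresh element of `A i` outside a finite set
  let pick : Finset V → I → V := fun u i => ((hA i).diff u.finite_toSet).nonempty.choose
  have pick_mem : ∀ u i, pick u i ∈ A i ∧ pick u i ∉ u := by
    intro u i
    have h := ((hA i).diff u.finite_toSet).nonempty.choose_spec
    exact ⟨h.1, by simpa using h.2⟩
  -- the recursion producing the sets of used vertices
  let used : ℕ → Finset V := fun n =>
    Nat.rec ∅ (fun m u => if h : ∃ d : D, ι d = m then insert (pick u h.choose.1) u else u) n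
  have hsucc : ∀ n, used (n + 1) =
      if h : ∃ d : D, ι d = n then insert (pick (used n) h.choose.1) (used n) else used n :=
    fun n => rfl
  let g : D → V := fun d => pick (used (ι d)) d.1
  have hstep : ∀ d : D, used (ι d + 1) = insert (g d) (used (ι d)) := by
    intro d
    have h : ∃ d' : D, ι d' = ι d := ⟨d, rfl⟩
    rw [hsucc, dif_pos h]
    have : h.choose = d := hι h.choose_spec
    rw [this]
  have hmono : ∀ m n, m ≤ n → used m ⊆ used n := by
    intro m n hmn
    induction n with
    | zero => simp [Nat.le_zero.mp hmn]
    | succ k ih =>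
      rcases Nat.lt_or_ge m (k + 1) with h | h
      · refine (ih (Nat.lt_succ_iff.mp h)).trans ?_
        rw [hsucc]
        split_ifs with h'
        · exact Finset.subset_insert _ _
        · exact Finset.Subset.refl _
      · have : m = k + 1 := le_antisymm hmn h
        simp [this]
  have hgA : ∀ d : D, g d ∈ A d.1 := fun d => (pick_mem _ _).1
  have hgnot : ∀ d : D, g d ∉ used (ι d) := fun d => (pick_mem _ _).2
  have hginj : Function.Injective g := by
    intro d₁ d₂ hg
    by_contra hne
    have hιne : ι d₁ ≠ ι d₂ := fun h => hne (hι h)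
    rcases lt_or_gt_of_ne hιne with h | h
    · have : g d₁ ∈ used (ι d₂) :=
        hmono _ _ h (by rw [hstep d₁]; exact Finset.mem_insert_self _ _)
      exact hgnot d₂ (hg ▸ this)
    · have : g d₂ ∈ used (ι d₁) :=
        hmono _ _ h (by rw [hstep d₂]; exact Finset.mem_insert_self _ _)
      exact hgnot d₁ (hg.symm ▸ this)
  refine ⟨fun x => if h : ∃ d : D, g d = x then h.choose.2.1 else true, fun i c => ?_⟩
  apply Set.infinite_of_injective_forall_mem (f := fun n : ℕ => g (i, c, n))
  case hi =>
    intro n m hnm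
    have := hginj hnm
    simpa using congrArg (fun d : D => d.2.2) this
  case hf =>
    intro n
    refine ⟨hgA (i, c, n), ?_⟩
    have h : ∃ d : D, g d = g (i, c, n) := ⟨_, rfl⟩
    show (if h : ∃ d : D, g d = g (i, c, n) then h.choose.2.1 else true) = c
    rw [dif_pos h]
    have : h.choose = (i, c, n) := hginj h.choose_spec
    rw [this]


/-- A colouring minimizing the number of monochromatic (ordered) adjacent pairs inside a
finite set `W` makes every vertex of `W` have at least as many opposite-coloured as
same-coloured neighbours inside `W`. -/
lemma exists_min_colouring {V : Type*} [DecidableEq V] (G : SimpleGraph V)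
    [DecidableRel G.Adj] (W : Finset V) :
    ∃ σ : V → Bool, ∀ v ∈ W,
      (W.filter (fun y => G.Adj v y ∧ σ y = σ v)).card ≤
      (W.filter (fun y => G.Adj v y ∧ σ y ≠ σ v)).card := by
  classical
  set cost : (V → Bool) → ℕ :=
    fun σ => ∑ a ∈ W, (W.filter (fun y => G.Adj a y ∧ σ y = σ a)).card with hcost
  have hne : (Set.range cost).Nonempty := ⟨_, Set.mem_range_self (fun _ => true)⟩
  obtain ⟨σ, hσeq⟩ := Nat.sInf_mem hne
  have hmin : ∀ τ, cost σ ≤ cost τ := fun τ => le_trans (le_of_eq hσeq) (Nat.sInf_le ⟨τ, rfl⟩)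
  refine ⟨σ, fun v hv => ?_⟩
  set σ' : V → Bool := Function.update σ v (!σ v) with hσ'def
  have hσ'v : σ' v = !σ v := Function.update_self _ _ _
  have hσ'y : ∀ y, y ≠ v → σ' y = σ y := fun y hy => Function.update_of_ne hy _ _
  -- decomposition of the cost
  have key : ∀ τ : V → Bool, cost τ =
      (W.filter (fun y => G.Adj v y ∧ τ y = τ v)).card
      + (∑ a ∈ W.erase v, ((W.erase v).filter (fun y => G.Adj a y ∧ τ y = τ a)).card
      + ((W.erase v).filter (fun a => G.Adj a v ∧ τ v = τ a)).card) := by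
    intro τ
    show ∑ a ∈ W, (W.filter (fun y => G.Adj a y ∧ τ y = τ a)).card = _
    rw [← Finset.add_sum_erase W _ hv]
    congr 1
    have h1 : ∀ a ∈ W.erase v, (W.filter (fun y => G.Adj a y ∧ τ y = τ a)).card
        = ((W.erase v).filter (fun y => G.Adj a y ∧ τ y = τ a)).card
          + (if G.Adj a v ∧ τ v = τ a then 1 else 0) := by
      intro a ha
      conv_lhs => rw [← Finset.insert_erase hv]
      rw [Finset.filter_insert]
      split_ifs with h
      · rw [Finset.card_insert_of_notMem (by simp)]
      · rw [Nat.add_zero]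
    rw [Finset.sum_congr rfl h1, Finset.sum_add_distrib]
    congr 1
    exact (Finset.card_filter _ _).symm
  -- erase-level sums agree for σ and σ'
  have eterm_eq : ∑ a ∈ W.erase v, ((W.erase v).filter (fun y => G.Adj a y ∧ σ' y = σ' a)).card
      = ∑ a ∈ W.erase v, ((W.erase v).filter (fun y => G.Adj a y ∧ σ y = σ a)).card := by
    refine Finset.sum_congr rfl fun a ha => ?_
    congr 1
    apply Finset.filter_congr
    intro y hy
    rw [hσ'y y (Finset.ne_of_mem_erase hy), hσ'y a (Finset.ne_of_mem_erase ha)]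
  -- the vertex term and tail term for σ'
  have hv' : (W.filter (fun y => G.Adj v y ∧ σ' y = σ' v)).card
      = (W.filter (fun y => G.Adj v y ∧ σ y ≠ σ v)).card := by
    congr 1
    ext y
    simp only [Finset.mem_filter]
    constructor
    · rintro ⟨hyW, hadj, heq⟩
      rw [hσ'y y hadj.ne', hσ'v] at heq
      exact ⟨hyW, hadj, by simp [heq]⟩
    · rintro ⟨hyW, hadj, hne2⟩
      rw [hσ'y y hadj.ne', hσ'v]
      exact ⟨hyW, hadj, by revert hne2; cases σ y <;> cases σ v <;> simp⟩
  have tailσ : ((W.erase v).filter (fun a => G.Adj a v ∧ σ v = σ a)).card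
      = (W.filter (fun y => G.Adj v y ∧ σ y = σ v)).card := by
    congr 1
    ext y
    simp only [Finset.mem_filter, Finset.mem_erase]
    constructor
    · rintro ⟨⟨_, hyW⟩, hadj, heq⟩
      exact ⟨hyW, hadj.symm, heq.symm⟩
    · rintro ⟨hyW, hadj, heq⟩
      exact ⟨⟨hadj.ne', hyW⟩, hadj.symm, heq.symm⟩
  have tailσ' : ((W.erase v).filter (fun a => G.Adj a v ∧ σ' v = σ' a)).card
      = (W.filter (fun y => G.Adj v y ∧ σ y ≠ σ v)).card := by
    congr 1
    ext y
    simp only [Finset.mem_filter, Finset.mem_erase]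
    constructor
    · rintro ⟨⟨hne2, hyW⟩, hadj, heq⟩
      rw [hσ'y y hne2, hσ'v] at heq
      exact ⟨hyW, hadj.symm, by revert heq; cases σ y <;> cases σ v <;> simp⟩
    · rintro ⟨hyW, hadj, hne2⟩
      refine ⟨⟨hadj.ne', hyW⟩, hadj.symm, ?_⟩
      rw [hσ'y y hadj.ne', hσ'v]
      revert hne2; cases σ y <;> cases σ v <;> simp
  have h1 := key σ
  have h2 := key σ'
  rw [hv', eterm_eq, tailσ'] at h2
  rw [tailσ] at h1
  have := hmin σ'
  omega

/-- Every countable graph in which all but finitely many vertices have infinite degree admits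
an unfriendly partition. -/
theorem countable_cofinitelyInfiniteDegree_unfriendly {V : Type*} [Countable V]
    (G : SimpleGraph V) (hfin : {v : V | (G.neighborSet v).Finite}.Finite) :
    ∃ π : V → Bool, Unfriendly G π := by
  show ∃ π : V → Bool, ∀ x : V,
      #{y : V | G.Adj x y ∧ π y = π x} ≤ #{y : V | G.Adj x y ∧ π y ≠ π x}
  classical
  set F : Set V := {v | (G.neighborSet v).Finite} with hF
  set Wset : Set V := F ∪ ⋃ v ∈ F, G.neighborSet v with hWset
  have hWfin : Wset.Finite := hfin.union (Set.Finite.biUnion hfin (fun v hv => hv))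
  set WF : Finset V := hWfin.toFinset with hWF
  obtain ⟨σ, hσ⟩ := exists_min_colouring G WF
  set I := {v : V // (G.neighborSet v).Infinite} with hI
  obtain ⟨τ, hτ⟩ := exists_balanced (fun i : I => G.neighborSet i.1 \ Wset)
    (fun i => i.2.diff hWfin)
  set π : V → Bool := fun x => if x ∈ Wset then σ x else τ x with hπdef
  have hπW : ∀ y ∈ Wset, π y = σ y := fun y hy => if_pos hy
  have hπnW : ∀ y, y ∉ Wset → π y = τ y := fun y hy => if_neg hy
  refine ⟨π, fun v => ?_⟩
  by_cases hv : (G.neighborSet v).Finite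
  · -- finite degree: v and all its neighbours are in Wset
    have hvW : v ∈ Wset := Or.inl hv
    have hnb : ∀ y, G.Adj v y → y ∈ Wset := fun y hy =>
      Or.inr (Set.mem_biUnion hv hy)
    have hsame : {y : V | G.Adj v y ∧ π y = π v}
        = ↑(WF.filter (fun y => G.Adj v y ∧ σ y = σ v)) := by
      ext y
      simp only [Set.mem_setOf_eq, Finset.coe_filter, Set.mem_setOf_eq,
        hWF, Set.Finite.mem_toFinset]
      constructor
      · rintro ⟨hadj, heq⟩
        rw [hπW y (hnb y hadj), hπW v hvW] at heq
        exact ⟨hnb y hadj, hadj, heq⟩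
      · rintro ⟨hyW, hadj, heq⟩
        rw [hπW y hyW, hπW v hvW]
        exact ⟨hadj, heq⟩
    have hdiff : {y : V | G.Adj v y ∧ π y ≠ π v}
        = ↑(WF.filter (fun y => G.Adj v y ∧ σ y ≠ σ v)) := by
      ext y
      simp only [Set.mem_setOf_eq, Finset.coe_filter, Set.mem_setOf_eq,
        hWF, Set.Finite.mem_toFinset]
      constructor
      · rintro ⟨hadj, heq⟩
        rw [hπW y (hnb y hadj), hπW v hvW] at heq
        exact ⟨hnb y hadj, hadj, heq⟩
      · rintro ⟨hyW, hadj, heq⟩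
        rw [hπW y hyW, hπW v hvW]
        exact ⟨hadj, heq⟩
    rw [hsame, hdiff]
    simp only [Finset.coe_sort_coe, Cardinal.mk_coe_finset]
    exact_mod_cast hσ v (hWfin.mem_toFinset.mpr hvW)
  · -- infinite degree
    have hvI : (G.neighborSet v).Infinite := hv
    have hinf : {y ∈ G.neighborSet v \ Wset | τ y = !π v}.Infinite := hτ ⟨v, hvI⟩ (!π v)
    have hsub : {y ∈ G.neighborSet v \ Wset | τ y = !π v}
        ⊆ {y : V | G.Adj v y ∧ π y ≠ π v} := by
      rintro y ⟨⟨hadj, hyW⟩, hc⟩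
      refine ⟨hadj, ?_⟩
      rw [hπnW y hyW, hc]
      exact Bool.not_ne_self _
    have hdinf : {y : V | G.Adj v y ∧ π y ≠ π v}.Infinite := hinf.mono hsub
    have h1 : #{y : V | G.Adj v y ∧ π y = π v} ≤ Cardinal.aleph0 := Cardinal.mk_le_aleph0
    have h2 : Cardinal.aleph0 ≤ #{y : V | G.Adj v y ∧ π y ≠ π v} := by
      have := Set.infinite_coe_iff.mpr hdinf
      exact Cardinal.infinite_iff.mp this
    exact h1.trans h2
end

section
/- If G is a countable graph in which every vertex has infinite degree, then G admits an unfriendly partition; in fact there is a partition π : V(G) → {0,1} in which every vertex has infinitely many neighbours in the opposite class. -/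
open Cardinal

/-- Every countable graph in which every vertex has infinite degree admits an unfriendly
partition; in fact one in which every vertex has infinitely many neighbours in the opposite
class. -/
theorem countable_allInfiniteDegree_unfriendly {V : Type*} [Countable V]
    (G : SimpleGraph V) (hinf : ∀ v : V, (G.neighborSet v).Infinite) :
    ∃ π : V → Bool, Unfriendly G π ∧
      ∀ x : V, {y : V | G.Adj x y ∧ π y ≠ π x}.Infinite := by
  classical
  cases isEmpty_or_nonempty V with
  | inl h => exact ⟨fun _ => false, fun x => (h.false x).elim, fun x => (h.false x).elim⟩
  | inr h =>
  obtain ⟨e, he⟩ := exists_surjective_nat V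
  -- `pick n l` : a neighbour of `e n.unpair.1` not in the list `l`
  have hnon : ∀ (n : ℕ) (l : List V),
      ((G.neighborSet (e n.unpair.1)) \ {v | v ∈ l}).Nonempty := fun n l =>
    ((hinf (e n.unpair.1)).diff (l.finite_toSet)).nonempty
  set pick : ℕ → List V → V := fun n l => (hnon n l).some with hpickdef
  have hpick : ∀ (n : ℕ) (l : List V),
      pick n l ∈ (G.neighborSet (e n.unpair.1)) \ {v | v ∈ l} := fun n l =>
    (hnon n l).some_mem
  -- `s n` : list of vertices coloured before step `n`
  set s : ℕ → List V := fun n => Nat.rec [] (fun k l => pick k l :: l) n with hsdef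
  have hs_succ : ∀ k, s (k + 1) = pick k (s k) :: s k := fun k => rfl
  set g : ℕ → V := fun n => pick n (s n) with hgdef
  have hg_mem : ∀ n, g n ∈ G.neighborSet (e n.unpair.1) := fun n => (hpick n (s n)).1
  have hg_not : ∀ n, g n ∉ s n := fun n => (hpick n (s n)).2
  have hg_in : ∀ m n, m < n → g m ∈ s n := by
    intro m n hmn
    induction n with
    | zero => omega
    | succ k ih =>
      rw [hs_succ]
      rcases Nat.lt_succ_iff_lt_or_eq.mp hmn with h' | h'
      · exact List.mem_cons_of_mem _ (ih h')
      · subst h'; exact List.mem_cons_self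
  have hg_inj : Function.Injective g := by
    intro m n hmn
    by_contra hne
    rcases Nat.lt_or_ge m n with h' | h'
    · exact hg_not n (hmn ▸ hg_in m n h')
    · exact hg_not m (hmn ▸ hg_in n m (lt_of_le_of_ne h' (Ne.symm hne)))
  -- the colour assigned at step `n`
  set bcol : ℕ → Bool := fun n => decide (n.unpair.2 % 2 = 1) with hbcol
  set π : V → Bool := fun v => if h : ∃ n, g n = v then bcol (Nat.find h) else false with hπ
  have hπg : ∀ n, π (g n) = bcol n := by
    intro n
    have hex : ∃ m, g m = g n := ⟨n, rfl⟩
    have : Nat.find hex = n := hg_inj (Nat.find_spec hex)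
    simp only [hπ, dif_pos hex, this]
  -- every vertex has infinitely many neighbours of each colour
  have key : ∀ (x : V) (b : Bool), {y : V | G.Adj x y ∧ π y = b}.Infinite := by
    intro x b
    obtain ⟨i, hi⟩ := he x
    set f : ℕ → V := fun m => g (Nat.pair i (2 * m + b.toNat)) with hf
    apply Set.infinite_of_injective_forall_mem (f := f)
    · intro m m' hmm'
      have := hg_inj hmm'
      have := Nat.pair_eq_pair.mp this
      omega
    · intro m
      have hu : (Nat.pair i (2 * m + b.toNat)).unpair = (i, 2 * m + b.toNat) :=
        Nat.unpair_pair _ _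
      have hmem := hg_mem (Nat.pair i (2 * m + b.toNat))
      rw [hu] at hmem
      have hcol : π (f m) = b := by
        rw [hf]
        rw [hπg]
        simp only [hbcol, hu]
        cases b <;> simp [Nat.mul_add_mod]
      exact ⟨hi ▸ hmem, hcol⟩
  refine ⟨π, ?_, ?_⟩
  · intro x
    have hdiff : {y : V | G.Adj x y ∧ π y ≠ π x}.Infinite := by
      apply (key x (!π x)).mono
      intro y hy
      exact ⟨hy.1, by simp [hy.2]⟩
    have h1 : #{y : V | G.Adj x y ∧ π y = π x} ≤ Cardinal.aleph0 :=
      Cardinal.mk_le_aleph0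
    have h2 : Cardinal.aleph0 ≤ #{y : V | G.Adj x y ∧ π y ≠ π x} := by
      rw [Cardinal.aleph0_le_mk_iff, ← Set.infinite_coe_iff] at *
      exact hdiff
    exact h1.trans h2
  · intro x
    apply (key x (!π x)).mono
    intro y hy
    exact ⟨hy.1, by simp [hy.2]⟩
end

section
/- Let 𝒰 be a finitely closed class of graphs, G a graph in the Schmidt closure of 𝒰 with rank r(G), and S a finite vertex set such that every component of G − S has rank less than r(G). Then for any finitely many components C₁,…,Cₙ of G − S, the induced subgraph G[S ∪ C₁ ∪ … ∪ Cₙ] has rank at most max_i r(C_i), and in particular rank strictly less than r(G). -/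
open Cardinal

universe u

/-- A class of graphs: a predicate on simple graphs over arbitrary vertex types in universe `u`. -/
def GraphClass : Type (u + 1) := ∀ (V : Type u), SimpleGraph V → Prop

/-- The component graph: the subgraph of `G` induced by a connected component `C` of `G - S`. -/
def CompGraph {V : Type u} (G : SimpleGraph V) (S : Set V)
    (C : (G.induce Sᶜ).ConnectedComponent) : SimpleGraph C.supp :=
  (G.induce Sᶜ).induce C.supp

/-- The Schmidt hierarchy: `SchmidtLevel 𝒰 0 = 𝒰`, and for `μ > 0` a graph `G` lies in
`SchmidtLevel 𝒰 μ` iff there is a finite vertex set `S` such that every component of `G - S`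
lies in `SchmidtLevel 𝒰 lam` for some `lam < μ`. -/
noncomputable def SchmidtLevel (𝒰 : GraphClass.{u}) (μ : Ordinal.{u}) : GraphClass.{u} :=
  fun V G =>
    if μ = 0 then 𝒰 V G
    else ∃ S : Set V, S.Finite ∧
      ∀ C : (G.induce Sᶜ).ConnectedComponent,
        ∃ lam : Ordinal.{u}, ∃ _ : lam < μ, SchmidtLevel 𝒰 lam C.supp (CompGraph G S C)
  termination_by μ
  decreasing_by exact ‹_›

/-- A graph belongs to the Schmidt closure of `𝒰` if it lies in some level of the hierarchy. -/
def InSchmidtClosure (𝒰 : GraphClass.{u}) {V : Type u} (G : SimpleGraph V) : Prop :=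
  ∃ μ : Ordinal.{u}, SchmidtLevel 𝒰 μ V G

/-- The rank of a graph in the Schmidt closure: the least level containing it. -/
noncomputable def SchmidtRank (𝒰 : GraphClass.{u}) {V : Type u} (G : SimpleGraph V) :
    Ordinal.{u} :=
  sInf {μ : Ordinal.{u} | SchmidtLevel 𝒰 μ V G}

/-- A class of graphs is finitely closed: it is closed under isomorphism, under finite (binary)
disjoint unions, and under adding finitely many new vertices joined arbitrarily to each other
and to the old vertices. -/
structure FinitelyClosed (𝒰 : GraphClass.{u}) : Prop where
  iso_closed : ∀ {V W : Type u} (G : SimpleGraph V) (H : SimpleGraph W),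
    Nonempty (G ≃g H) → 𝒰 V G → 𝒰 W H
  sum_mem : ∀ {V W : Type u} (G : SimpleGraph V) (H : SimpleGraph W),
    𝒰 V G → 𝒰 W H → 𝒰 (V ⊕ W) (G.sum H)
  addFinite_mem : ∀ {V : Type u} (G : SimpleGraph V) (T : Set V),
    T.Finite → 𝒰 (↑Tᶜ) (G.induce Tᶜ) → 𝒰 V G

open SimpleGraph

/-! ### Auxiliary lemmas -/

theorem SchmidtLevel_def (𝒰 : GraphClass.{u}) (μ : Ordinal.{u}) {V : Type u} (G : SimpleGraph V) :
    SchmidtLevel 𝒰 μ V G ↔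
      if μ = 0 then 𝒰 V G
      else ∃ S : Set V, S.Finite ∧
        ∀ C : (G.induce Sᶜ).ConnectedComponent,
          ∃ lam : Ordinal.{u}, ∃ _ : lam < μ, SchmidtLevel 𝒰 lam C.supp (CompGraph G S C) := by
  rw [SchmidtLevel]

/-- congruence iso for `induce`. -/
def induceSetCongr {V : Type u} (G : SimpleGraph V) {A A' : Set V} (h : A = A') :
    G.induce A ≃g G.induce A' where
  toEquiv := Equiv.setCongr h
  map_rel_iff' := Iff.rfl

/-- collapsing a nested `induce`. -/
noncomputable def induceInduceIso {V : Type u} (G : SimpleGraph V) (B : Set V) (A : Set ↥B) :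
    (G.induce B).induce A ≃g G.induce (Subtype.val '' A) where
  toEquiv := Equiv.Set.image Subtype.val A Subtype.val_injective
  map_rel_iff' := by
    rintro ⟨⟨a, hB⟩, hA⟩ ⟨⟨b, hB'⟩, hA'⟩
    simp [Equiv.Set.image, Equiv.Set.imageOfInjOn]

/-- a graph isomorphism restricted to a connected component. -/
def compIso {V W : Type*} {K : SimpleGraph V} {K' : SimpleGraph W} (e : K ≃g K')
    (C : K.ConnectedComponent) :
    K.induce C.supp ≃g K'.induce (e.connectedComponentEquiv C).supp where
  toEquiv := ConnectedComponent.isoEquivSupp e C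
  map_rel_iff' := by
    rintro ⟨a, ha⟩ ⟨b, hb⟩
    simp only [ConnectedComponent.isoEquivSupp, Equiv.coe_fn_mk, comap_adj,
      Function.Embedding.coe_subtype]
    exact e.map_rel_iff

/-- disjoint pieces with no cross edges induce a disjoint sum. -/
noncomputable def induceUnionIso {V : Type u} (G : SimpleGraph V) {A B : Set V}
    (hd : Disjoint A B) (hn : ∀ a ∈ A, ∀ b ∈ B, ¬ G.Adj a b) :
    G.induce (A ∪ B) ≃g (G.induce A).sum (G.induce B) := by
  classical
  refine ⟨Equiv.Set.union hd, ?_⟩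
  rintro ⟨x, hx⟩ ⟨y, hy⟩
  have key : ∀ (z : ↥(A ∪ B)) (hz : (z : V) ∈ A), Equiv.Set.union hd z = Sum.inl ⟨z, hz⟩ :=
    fun z hz => Equiv.Set.union_apply_left hd hz
  have key' : ∀ (z : ↥(A ∪ B)) (hz : (z : V) ∈ B), Equiv.Set.union hd z = Sum.inr ⟨z, hz⟩ :=
    fun z hz => Equiv.Set.union_apply_right hd hz
  rcases hx with hx | hx <;> rcases hy with hy | hy
  · rw [key _ hx, key _ hy]; rfl
  · rw [key _ hx, key' _ hy]
    simp only [sum_adj, comap_adj, Function.Embedding.coe_subtype]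
    exact iff_of_false (fun h => h.elim) (hn _ hx _ hy)
  · rw [key' _ hx, key _ hy]
    simp only [sum_adj, comap_adj, Function.Embedding.coe_subtype]
    exact iff_of_false (fun h => h.elim) (fun h => hn _ hy _ hx h.symm)
  · rw [key' _ hx, key' _ hy]; rfl

/-- `SchmidtLevel` is closed under isomorphism. -/
theorem SchmidtLevel.of_iso (𝒰 : GraphClass.{u}) (h𝒰 : FinitelyClosed 𝒰) :
    ∀ (μ : Ordinal.{u}) {V W : Type u} {G : SimpleGraph V} {H : SimpleGraph W},
      (G ≃g H) → SchmidtLevel 𝒰 μ V G → SchmidtLevel 𝒰 μ W H := by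
  intro μ
  induction μ using Ordinal.induction with
  | h μ ih =>
    intro V W G H e hG
    rw [SchmidtLevel_def] at hG ⊢
    by_cases h0 : μ = 0
    · rw [if_pos h0] at hG ⊢; exact h𝒰.iso_closed _ _ ⟨e⟩ hG
    · rw [if_neg h0] at hG ⊢
      obtain ⟨S, hSfin, hcomp⟩ := hG
      refine ⟨⇑e '' S, hSfin.image _, ?_⟩
      have hmem : ∀ v : V, v ∈ Sᶜ ↔ e v ∈ (⇑e '' S)ᶜ := by
        intro v
        simp only [Set.mem_compl_iff, Set.mem_image, not_exists, not_and]
        constructor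
        · intro hv x hx hex
          exact hv (by rwa [← e.toEquiv.injective hex])
        · intro h hv
          exact h v hv rfl
      let E : G.induce Sᶜ ≃g H.induce (⇑e '' S)ᶜ :=
        { toEquiv := e.toEquiv.subtypeEquiv hmem
          map_rel_iff' := by rintro ⟨a, _⟩ ⟨b, _⟩; exact e.map_rel_iff }
      intro D
      obtain ⟨lam, hlam, hlev⟩ := hcomp (E.connectedComponentEquiv.symm D)
      refine ⟨lam, hlam, ?_⟩
      have iso2 :
          CompGraph G S (E.connectedComponentEquiv.symm D) ≃g CompGraph H (⇑e '' S) D :=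
        (compIso E (E.connectedComponentEquiv.symm D)).trans
          (induceSetCongr _ (by rw [Equiv.apply_symm_apply]))
      exact ih lam hlam iso2 hlev

/-- Transfer a walk in `G.induce A` whose support lies (via `val`) in `B` to reachability
in `G.induce B`. -/
lemma reachable_induce_of_walk {V : Type u} {G : SimpleGraph V} {A B : Set V} :
    ∀ {a b : ↥A} (p : (G.induce A).Walk a b),
      (∀ z ∈ p.support, (z : V) ∈ B) → ∀ (ha : (a : V) ∈ B) (hb : (b : V) ∈ B),
      (G.induce B).Reachable ⟨a, ha⟩ ⟨b, hb⟩ := by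
  intro a b p
  induction p with
  | nil => intro _ ha hb; exact Reachable.refl _
  | @cons u v w h p ih =>
      intro hsupp ha hb
      have hv : (v : V) ∈ B := hsupp v (by simp)
      have hadj : (G.induce B).Adj ⟨u, ha⟩ ⟨v, hv⟩ := h
      exact hadj.reachable.trans (ih (fun z hz => hsupp z (by simp [hz])) hv hb)

/-- A walk of `K` whose support lies in `B` gives reachability in `K.induce B`. -/
lemma reachable_induce_of_walk₀ {V : Type u} {K : SimpleGraph V} {B : Set V} :
    ∀ {a b : V} (p : K.Walk a b),
      (∀ z ∈ p.support, z ∈ B) → ∀ (ha : a ∈ B) (hb : b ∈ B),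
      (K.induce B).Reachable ⟨a, ha⟩ ⟨b, hb⟩ := by
  intro a b p
  induction p with
  | nil => intro _ ha hb; exact Reachable.refl _
  | @cons u v w h p ih =>
      intro hsupp ha hb
      have hv : v ∈ B := hsupp v (by simp)
      have hadj : (K.induce B).Adj ⟨u, ha⟩ ⟨v, hv⟩ := h
      exact hadj.reachable.trans (ih (fun z hz => hsupp z (by simp [hz])) hv hb)

/-- every vertex on a walk lies in the component of the start. -/
lemma mem_supp_of_mem_support {V : Type u} {K : SimpleGraph V} {x y : V} (p : K.Walk x y)
    {z : V} (hz : z ∈ p.support) : z ∈ (K.connectedComponentMk x).supp := by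
  classical
  exact ConnectedComponent.sound ((p.takeUntil z hz).reachable).symm

/-- Walk-closed predicates hold on the whole component supp. -/
lemma supp_subset_of_closed {V : Type u} {G : SimpleGraph V} {A : Set V} (Q : V → Prop)
    (hQ : ∀ a b : V, Q a → a ∈ A → b ∈ A → G.Adj a b → Q b) (x : ↥A) (hx : Q ↑x) :
    ∀ y ∈ ((G.induce A).connectedComponentMk x).supp, Q ↑y := by
  intro y hy
  rw [ConnectedComponent.mem_supp_iff, ConnectedComponent.eq] at hy
  obtain ⟨p⟩ := hy.symm
  clear hy
  induction p with
  | nil => exact hx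
  | @cons u v w h p ih => exact ih (hQ u v hx u.2 v.2 h)

/-- Components in two ambient induced subgraphs with mutually contained supports
have equal supports (as subsets of `V`). -/
lemma supp_image_eq {V : Type u} {G : SimpleGraph V} {A B : Set V} {x : V} (hA : x ∈ A)
    (hB : x ∈ B)
    (h1 : Subtype.val '' ((G.induce A).connectedComponentMk ⟨x, hA⟩).supp ⊆ B)
    (h2 : Subtype.val '' ((G.induce B).connectedComponentMk ⟨x, hB⟩).supp ⊆ A) :
    Subtype.val '' ((G.induce A).connectedComponentMk ⟨x, hA⟩).supp
      = Subtype.val '' ((G.induce B).connectedComponentMk ⟨x, hB⟩).supp := by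
  have key : ∀ (A B : Set V) (hA : x ∈ A) (hB : x ∈ B),
      Subtype.val '' ((G.induce A).connectedComponentMk ⟨x, hA⟩).supp ⊆ B →
      Subtype.val '' ((G.induce A).connectedComponentMk ⟨x, hA⟩).supp ⊆
        Subtype.val '' ((G.induce B).connectedComponentMk ⟨x, hB⟩).supp := by
    intro A B hA hB h1 v hv
    obtain ⟨y, hy, rfl⟩ := hv
    rw [ConnectedComponent.mem_supp_iff, ConnectedComponent.eq] at hy
    obtain ⟨p⟩ := hy.symm
    have hsupp : ∀ z ∈ p.support, (z : V) ∈ B := by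
      intro z hz
      exact h1 ⟨z, mem_supp_of_mem_support p hz, rfl⟩
    have hr := reachable_induce_of_walk p hsupp hB (hsupp _ p.end_mem_support)
    refine ⟨⟨↑y, hsupp _ p.end_mem_support⟩, ?_, rfl⟩
    rw [ConnectedComponent.mem_supp_iff, ConnectedComponent.eq]
    exact hr.symm
  exact le_antisymm (key A B hA hB h1) (key B A hB hA h2)

/-- components with equal supports (in `V`) have isomorphic induced graphs. -/
noncomputable def compGraphIsoOfSuppEq {V : Type u} {G : SimpleGraph V} {A B : Set V}
    {D : (G.induce A).ConnectedComponent} {E : (G.induce B).ConnectedComponent}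
    (h : Subtype.val '' D.supp = Subtype.val '' E.supp) :
    (G.induce A).induce D.supp ≃g (G.induce B).induce E.supp :=
  (induceInduceIso G A D.supp).trans
    ((induceSetCongr G h).trans (induceInduceIso G B E.supp).symm)

lemma image_val_compl {V : Type u} {A : Set V} (s : Set ↥A) :
    (Subtype.val '' sᶜ : Set V) = A \ Subtype.val '' s := by
  ext x
  simp only [Set.mem_image, Set.mem_compl_iff, Set.mem_diff]
  constructor
  · rintro ⟨y, hy, rfl⟩
    exact ⟨y.2, fun ⟨z, hz, hzy⟩ => hy (Subtype.val_injective hzy ▸ hz)⟩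
  · rintro ⟨hxA, hx⟩
    exact ⟨⟨x, hxA⟩, fun hmem => hx ⟨⟨x, hxA⟩, hmem, rfl⟩, rfl⟩

/-- the induced graph on a component supp is preconnected. -/
lemma induce_supp_preconnected {V : Type u} (K : SimpleGraph V) (C : K.ConnectedComponent) :
    (K.induce C.supp).Preconnected := by
  rintro ⟨x, hx⟩ ⟨y, hy⟩
  have hr : K.Reachable x y := ConnectedComponent.exact (hx.trans hy.symm)
  obtain ⟨p⟩ := hr
  exact reachable_induce_of_walk₀ p
    (fun z hz => by have := mem_supp_of_mem_support p hz; rwa [hx] at this) hx hy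

lemma supp_eq_univ_of_preconnected {V : Type u} {K : SimpleGraph V} (h : K.Preconnected)
    (C : K.ConnectedComponent) : C.supp = Set.univ := by
  obtain ⟨v, rfl⟩ := C.exists_rep
  ext x
  simp only [ConnectedComponent.mem_supp_iff, Set.mem_univ, iff_true]
  exact ConnectedComponent.sound (h x v)

section Comps
variable {V : Type u} {G : SimpleGraph V} {S : Set V}

lemma suppVal_disjoint {C D : (G.induce Sᶜ).ConnectedComponent} (h : C ≠ D) :
    Disjoint (Subtype.val '' C.supp) (Subtype.val '' D.supp) := by
  rw [Set.disjoint_left]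
  rintro x ⟨y, hy, rfl⟩ ⟨z, hz, hzy⟩
  obtain rfl := Subtype.val_injective hzy
  rw [ConnectedComponent.mem_supp_iff] at hy hz
  exact h (by rw [← hy, ← hz])

lemma no_adj_between {C D : (G.induce Sᶜ).ConnectedComponent} (h : C ≠ D) :
    ∀ a ∈ Subtype.val '' C.supp, ∀ b ∈ Subtype.val '' D.supp, ¬ G.Adj a b := by
  rintro a ⟨a', ha', rfl⟩ b ⟨b', hb', rfl⟩ hadj
  have hadj' : (G.induce Sᶜ).Adj a' b' := hadj
  rw [ConnectedComponent.mem_supp_iff] at ha' hb'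
  exact h (by rw [← ha', ← hb']; exact ConnectedComponent.sound hadj'.reachable)

end Comps

/-- finite unions of components lying in `𝒰` lie in `𝒰`. -/
lemma union_comps_mem (𝒰 : GraphClass.{u}) (h𝒰 : FinitelyClosed 𝒰) {V : Type u}
    (G : SimpleGraph V) (S : Set V) (t : Finset ((G.induce Sᶜ).ConnectedComponent))
    (ht : t.Nonempty) (hmem : ∀ C ∈ t, 𝒰 _ (CompGraph G S C)) :
    𝒰 _ (G.induce (⋃ C ∈ t, (Subtype.val '' C.supp))) := by
  classical
  induction ht using Finset.Nonempty.cons_induction with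
  | singleton a =>
      refine h𝒰.iso_closed _ _
        ⟨(induceInduceIso G Sᶜ a.supp).trans (induceSetCongr G (by simp))⟩
        (hmem a (by simp))
  | cons a s ha hs ih =>
      have hset : (⋃ C ∈ Finset.cons a s ha, (Subtype.val '' C.supp)) =
          (Subtype.val '' a.supp) ∪ ⋃ C ∈ s, (Subtype.val '' C.supp) := by
        rw [Finset.cons_eq_insert, Finset.set_biUnion_insert]
      have hd : Disjoint (Subtype.val '' a.supp) (⋃ C ∈ s, (Subtype.val '' C.supp)) := by
        refine Set.disjoint_iUnion₂_right.mpr fun C hC => suppVal_disjoint ?_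
        rintro rfl; exact ha hC
      have hn : ∀ x ∈ (Subtype.val '' a.supp), ∀ y ∈ ⋃ C ∈ s, (Subtype.val '' C.supp),
          ¬ G.Adj x y := by
        intro x hx y hy
        obtain ⟨C, hC, hyC⟩ := Set.mem_iUnion₂.mp hy
        exact no_adj_between (by rintro rfl; exact ha hC) x hx y hyC
      have h1 : 𝒰 _ (G.induce (Subtype.val '' a.supp)) :=
        h𝒰.iso_closed _ _ ⟨induceInduceIso G Sᶜ a.supp⟩ (hmem a (by simp))
      have h2 : 𝒰 _ (G.induce (⋃ C ∈ s, (Subtype.val '' C.supp))) :=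
        ih (fun C hC => hmem C (by simp [hC]))
      have hsum := h𝒰.sum_mem _ _ h1 h2
      refine h𝒰.iso_closed _ _ ⟨((induceUnionIso G hd hn).symm).trans
        (induceSetCongr G hset.symm)⟩ hsum

/-- for a preconnected graph, deleting the empty set leaves one component isomorphic
to the whole graph. -/
noncomputable def compGraphEmptyIso {Y : Type u} {X : SimpleGraph Y} (hpre : X.Preconnected)
    (E : (X.induce (∅ᶜ : Set Y)).ConnectedComponent) :
    (X.induce (∅ᶜ : Set Y)).induce E.supp ≃g X :=
  let i : X.induce (∅ᶜ : Set Y) ≃g X := (induceSetCongr X (by simp)).trans (induceUnivIso X)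
  (compIso i E).trans
    ((induceSetCongr X (supp_eq_univ_of_preconnected hpre _)).trans (induceUnivIso X))

/-- Lemma 3(i): if `S` is a finite vertex set such that every component of `G - S` has rank
less than `r(G)`, then for finitely many components `C₁, …, Cₙ` of `G - S` the induced
subgraph on `S` together with these components has rank at most `maxᵢ r(Cᵢ) < r(G)`. -/
theorem rank_induce_finitelyManyComponents (𝒰 : GraphClass.{u}) (h𝒰 : FinitelyClosed 𝒰)
    {V : Type u} (G : SimpleGraph V) (hG : InSchmidtClosure 𝒰 G)
    (S : Set V) (hS : S.Finite)
    (hcomp : ∀ C : (G.induce Sᶜ).ConnectedComponent,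
      InSchmidtClosure 𝒰 (CompGraph G S C) ∧
        SchmidtRank 𝒰 (CompGraph G S C) < SchmidtRank 𝒰 G)
    (t : Finset ((G.induce Sᶜ).ConnectedComponent)) (ht : t.Nonempty) :
    SchmidtRank 𝒰 (G.induce (S ∪ ⋃ C ∈ t, (Subtype.val '' C.supp))) ≤
        t.sup (fun C => SchmidtRank 𝒰 (CompGraph G S C)) ∧
      SchmidtRank 𝒰 (G.induce (S ∪ ⋃ C ∈ t, (Subtype.val '' C.supp))) <
        SchmidtRank 𝒰 G := by
  classical
  set ν := t.sup (fun C => SchmidtRank 𝒰 (CompGraph G S C)) with hν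
  set U : Set V := ⋃ C ∈ t, (Subtype.val '' C.supp) with hU
  set Wset : Set V := S ∪ U with hWdef
  have hUS : U ⊆ Sᶜ := by
    rw [hU]; exact Set.iUnion₂_subset fun C hC => Subtype.coe_image_subset _ _
  have hrank_mem : ∀ C : (G.induce Sᶜ).ConnectedComponent,
      SchmidtLevel 𝒰 (SchmidtRank 𝒰 (CompGraph G S C)) _ (CompGraph G S C) :=
    fun C => csInf_mem (hcomp C).1
  have hle : ∀ C ∈ t, SchmidtRank 𝒰 (CompGraph G S C) ≤ ν :=
    fun C hC => hν ▸ Finset.le_sup (f := fun C => SchmidtRank 𝒰 (CompGraph G S C)) hC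
  obtain ⟨C₀, hC₀⟩ := ht
  have hGpos : (0 : Ordinal) < SchmidtRank 𝒰 G :=
    lt_of_le_of_lt zero_le (hcomp C₀).2
  have hνlt : ν < SchmidtRank 𝒰 G := by
    rw [hν]
    rw [Finset.sup_lt_iff (by rwa [Ordinal.bot_eq_zero])]
    exact fun C _ => (hcomp C).2
  have hlevel : SchmidtLevel 𝒰 ν Wset (G.induce Wset) := by
    by_cases hν0 : ν = 0
    · -- `ν = 0` : the whole graph lies in `𝒰`
      rw [SchmidtLevel_def, if_pos hν0]
      have hmem0 : ∀ C ∈ t, 𝒰 _ (CompGraph G S C) := by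
        intro C hC
        have h0 : SchmidtRank 𝒰 (CompGraph G S C) = 0 :=
          le_antisymm (hν0 ▸ hle C hC) zero_le
        have hm := hrank_mem C
        rwa [h0, SchmidtLevel_def, if_pos rfl] at hm
      have hUmem : 𝒰 _ (G.induce U) := union_comps_mem 𝒰 h𝒰 G S t ⟨C₀, hC₀⟩ hmem0
      refine h𝒰.addFinite_mem _ (Subtype.val ⁻¹' S)
        (hS.preimage Subtype.val_injective.injOn) ?_
      have hval : (Subtype.val '' ((Subtype.val ⁻¹' S : Set ↥Wset)ᶜ)) = U := by
        rw [← Set.preimage_compl, Subtype.image_preimage_coe]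
        rw [hWdef]
        rw [Set.union_inter_distrib_right]
        rw [Set.inter_compl_self, Set.empty_union]
        exact Set.inter_eq_left.mpr hUS
      exact h𝒰.iso_closed _ _
        ⟨((induceInduceIso G Wset _).trans (induceSetCongr G hval)).symm⟩ hUmem
    · -- `ν ≠ 0`
      rw [SchmidtLevel_def, if_neg hν0]
      -- choose deletion sets inside each component
      have hkey : ∀ C : (G.induce Sᶜ).ConnectedComponent, ∃ s : Set ↥(C.supp), s.Finite ∧
          (C ∈ t → ∀ E : ((CompGraph G S C).induce sᶜ).ConnectedComponent,
            ∃ lam : Ordinal.{u}, lam < ν ∧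
              SchmidtLevel 𝒰 lam _ (((CompGraph G S C).induce sᶜ).induce E.supp)) := by
        intro C
        by_cases hC : C ∈ t
        · rcases eq_or_ne (SchmidtRank 𝒰 (CompGraph G S C)) 0 with h0 | h0
          · refine ⟨∅, Set.finite_empty, fun _ E => ⟨0, pos_iff_ne_zero.mpr hν0, ?_⟩⟩
            have hm := hrank_mem C
            rw [h0, SchmidtLevel_def, if_pos rfl] at hm
            rw [SchmidtLevel_def, if_pos rfl]
            exact h𝒰.iso_closed _ _
              ⟨(compGraphEmptyIso (induce_supp_preconnected (G.induce Sᶜ) C) E).symm⟩ hm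
          · have hm := hrank_mem C
            rw [SchmidtLevel_def, if_neg h0] at hm
            obtain ⟨s, hsfin, hslev⟩ := hm
            refine ⟨s, hsfin, fun _ E => ?_⟩
            obtain ⟨lam, hl, hlev⟩ := hslev E
            exact ⟨lam, lt_of_lt_of_le hl (hle C hC), hlev⟩
        · exact ⟨∅, Set.finite_empty, fun h => absurd h hC⟩
      choose sdel hsdelfin hsdellev using hkey
      -- the enlarged finite deletion set
      set Sbig : Set V :=
        S ∪ ⋃ C ∈ t, (Subtype.val '' (Subtype.val '' (sdel C))) with hSbigdef
      have hSbigfin : Sbig.Finite :=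
        hS.union (Set.Finite.biUnion t.finite_toSet fun C _ => ((hsdelfin C).image _).image _)
      refine ⟨Subtype.val ⁻¹' Sbig, hSbigfin.preimage Subtype.val_injective.injOn, ?_⟩
      have hBeq : ∀ C : (G.induce Sᶜ).ConnectedComponent,
          (Subtype.val '' (Subtype.val '' ((sdel C)ᶜ)) : Set V)
            = (Subtype.val '' C.supp) \ (Subtype.val '' (Subtype.val '' (sdel C))) := by
        intro C
        rw [image_val_compl, Set.image_diff Subtype.val_injective]
      have hsig : ∀ C : (G.induce Sᶜ).ConnectedComponent,
          (Subtype.val '' (Subtype.val '' (sdel C)) : Set V) ⊆ Subtype.val '' C.supp :=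
        fun C => Set.image_mono (Subtype.coe_image_subset _ _)
      set A₁ : Set V := Subtype.val '' ((Subtype.val ⁻¹' Sbig : Set ↥Wset)ᶜ) with hA₁def
      have hA₁ : A₁ = ⋃ C ∈ t, (Subtype.val '' (Subtype.val '' ((sdel C)ᶜ))) := by
        rw [hA₁def, ← Set.preimage_compl, Subtype.image_preimage_coe]
        ext x
        constructor
        · rintro ⟨hxW, hxn⟩
          rw [hSbigdef] at hxn
          have hxS : x ∉ S := fun h => hxn (Or.inl h)
          have hxσ : x ∉ ⋃ C ∈ t, (Subtype.val '' (Subtype.val '' (sdel C))) :=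
            fun h => hxn (Or.inr h)
          have hxU : x ∈ U := by
            rw [hWdef] at hxW
            rcases hxW with h | h
            · exact absurd h hxS
            · exact h
          rw [hU] at hxU
          obtain ⟨C, hC, hxP⟩ := Set.mem_iUnion₂.mp hxU
          refine Set.mem_iUnion₂.mpr ⟨C, hC, ?_⟩
          rw [hBeq C]
          exact ⟨hxP, fun h => hxσ (Set.mem_iUnion₂.mpr ⟨C, hC, h⟩)⟩
        · intro hx
          obtain ⟨C, hC, hxB⟩ := Set.mem_iUnion₂.mp hx
          rw [hBeq C] at hxB
          obtain ⟨hxP, hxσC⟩ := hxB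
          have hxU : x ∈ U := by rw [hU]; exact Set.mem_iUnion₂.mpr ⟨C, hC, hxP⟩
          refine ⟨by rw [hWdef]; exact Or.inr hxU, ?_⟩
          rw [hSbigdef]
          rintro (hxS | hxσ)
          · exact (hUS hxU) hxS
          · obtain ⟨D', hD', hxσD⟩ := Set.mem_iUnion₂.mp hxσ
            rcases eq_or_ne D' C with rfl | hne
            · exact hxσC hxσD
            · exact Set.disjoint_left.mp (suppVal_disjoint hne) (hsig D' hxσD) hxP
      intro D
      have iso₁ : (G.induce Wset).induce ((Subtype.val ⁻¹' Sbig : Set ↥Wset)ᶜ) ≃g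
          G.induce A₁ := induceInduceIso G Wset _
      obtain ⟨v, hv⟩ : ∃ v : ↥A₁, (G.induce A₁).connectedComponentMk v =
          iso₁.connectedComponentEquiv D := (iso₁.connectedComponentEquiv D).exists_rep
      have isoD : ((G.induce Wset).induce ((Subtype.val ⁻¹' Sbig : Set ↥Wset)ᶜ)).induce D.supp
          ≃g (G.induce A₁).induce ((G.induce A₁).connectedComponentMk v).supp :=
        (compIso iso₁ D).trans (induceSetCongr _ (by rw [hv]))
      have hvA : (v : V) ∈ A₁ := v.2
      have hvA' : (v : V) ∈ ⋃ C ∈ t, (Subtype.val '' (Subtype.val '' ((sdel C)ᶜ))) := by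
        rw [← hA₁]; exact hvA
      obtain ⟨C, hC, hvB⟩ := Set.mem_iUnion₂.mp hvA'
      have hQstep : ∀ a b : V, a ∈ (Subtype.val '' (Subtype.val '' ((sdel C)ᶜ)) : Set V) →
          a ∈ A₁ → b ∈ A₁ → G.Adj a b →
          b ∈ (Subtype.val '' (Subtype.val '' ((sdel C)ᶜ)) : Set V) := by
        intro a b haB haA hbA hadj
        have hbA' : b ∈ ⋃ C ∈ t, (Subtype.val '' (Subtype.val '' ((sdel C)ᶜ))) := by
          rw [← hA₁]; exact hbA
        obtain ⟨Cb, hCb, hbB⟩ := Set.mem_iUnion₂.mp hbA'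
        rcases eq_or_ne Cb C with rfl | hne
        · exact hbB
        · exfalso
          rw [hBeq C] at haB
          rw [hBeq Cb] at hbB
          exact no_adj_between hne.symm a haB.1 b hbB.1 hadj
      have hsub : Subtype.val '' ((G.induce A₁).connectedComponentMk v).supp ⊆
          (Subtype.val '' (Subtype.val '' ((sdel C)ᶜ)) : Set V) := by
        rintro _ ⟨y, hy, rfl⟩
        exact supp_subset_of_closed
          (fun z => z ∈ (Subtype.val '' (Subtype.val '' ((sdel C)ᶜ)) : Set V))
          hQstep v hvB y hy
      have hBCsub : (Subtype.val '' (Subtype.val '' ((sdel C)ᶜ)) : Set V) ⊆ A₁ := by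
        rw [hA₁]
        intro x hx
        exact Set.mem_iUnion₂.mpr ⟨C, hC, hx⟩
      have hEsub : Subtype.val ''
          ((G.induce (Subtype.val '' (Subtype.val '' ((sdel C)ᶜ)) : Set V)).connectedComponentMk
            ⟨(v : V), hvB⟩).supp ⊆ A₁ :=
        (Subtype.coe_image_subset _ _).trans hBCsub
      have heq : Subtype.val '' ((G.induce A₁).connectedComponentMk v).supp = Subtype.val ''
          ((G.induce (Subtype.val '' (Subtype.val '' ((sdel C)ᶜ)) : Set V)).connectedComponentMk
            ⟨(v : V), hvB⟩).supp :=
        supp_image_eq hvA hvB hsub hEsub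
      have isoDE : (G.induce A₁).induce ((G.induce A₁).connectedComponentMk v).supp ≃g
          (G.induce (Subtype.val '' (Subtype.val '' ((sdel C)ᶜ)) : Set V)).induce
            ((G.induce (Subtype.val '' (Subtype.val '' ((sdel C)ᶜ)) : Set V)).connectedComponentMk
              ⟨(v : V), hvB⟩).supp :=
        compGraphIsoOfSuppEq heq
      have iso₃ : (CompGraph G S C).induce (sdel C)ᶜ ≃g
          G.induce (Subtype.val '' (Subtype.val '' ((sdel C)ᶜ)) : Set V) :=
        (induceInduceIso (G.induce Sᶜ) C.supp (sdel C)ᶜ).trans (induceInduceIso G Sᶜ _)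
      obtain ⟨lam, hlam, hlev⟩ := hsdellev C hC (iso₃.connectedComponentEquiv.symm
        ((G.induce (Subtype.val '' (Subtype.val '' ((sdel C)ᶜ)) : Set V)).connectedComponentMk
          ⟨(v : V), hvB⟩))
      refine ⟨lam, hlam, ?_⟩
      have iso₄ : ((CompGraph G S C).induce (sdel C)ᶜ).induce
            (iso₃.connectedComponentEquiv.symm
              ((G.induce (Subtype.val '' (Subtype.val '' ((sdel C)ᶜ)) : Set V)).connectedComponentMk
                ⟨(v : V), hvB⟩)).supp ≃g
          (G.induce (Subtype.val '' (Subtype.val '' ((sdel C)ᶜ)) : Set V)).induce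
            ((G.induce (Subtype.val '' (Subtype.val '' ((sdel C)ᶜ)) : Set V)).connectedComponentMk
              ⟨(v : V), hvB⟩).supp :=
        (compIso iso₃ _).trans (induceSetCongr _ (by rw [Equiv.apply_symm_apply]))
      exact SchmidtLevel.of_iso 𝒰 h𝒰 lam ((iso₄.trans isoDE.symm).trans isoD.symm) hlev
  exact ⟨csInf_le' hlevel, lt_of_le_of_lt (csInf_le' hlevel) hνlt⟩
end

section
/- Let G be a countable graph and U ⊆ V(G) such that only finitely many vertices in V(G) \ U have infinite degree in G. Then every partition π : U → {0,1} extends to a partition π' of V(G) in which every vertex of V(G) \ U is happy. -/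
open Cardinal

namespace AMPProof
attribute [local instance] Classical.propDecidable
noncomputable section
variable {V : Type*} (G : SimpleGraph V)
def flp (A : Set V) (σ : V → Bool) : V → Bool := fun y => if y ∈ A then !(σ y) else σ y
lemma flp_mem {A : Set V} {σ : V → Bool} {y : V} (h : y ∈ A) : flp A σ y = !(σ y) := if_pos h
lemma flp_notMem {A : Set V} {σ : V → Bool} {y : V} (h : y ∉ A) : flp A σ y = σ y := if_neg h
def Nfin (x : V) : Finset V := if h : (G.neighborSet x).Finite then h.toFinset else ∅
lemma mem_Nfin {x : V} (h : (G.neighborSet x).Finite) {y : V} :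
    y ∈ Nfin G x ↔ G.Adj x y := by
  simp [Nfin, dif_pos h, Set.Finite.mem_toFinset, SimpleGraph.mem_neighborSet]
def indEq (a b : Bool) : ℤ := if a = b then 1 else 0
lemma indEq_comm (a b : Bool) : indEq a b = indEq b a := by cases a <;> cases b <;> rfl
def FF (σ : V → Bool) (p : V × V) : ℤ :=
  if G.Adj p.1 p.2 then indEq (σ p.1) (σ p.2) else 0
def pe (R : Finset V) (σ : V → Bool) : ℤ := ∑ p ∈ R ×ˢ R, FF G σ p
def Reg (X : Finset V) : Finset V := X ∪ X.biUnion (Nfin G)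
def dlt (X : Finset V) (σ : V → Bool) : ℤ :=
  pe G (Reg G X) (flp (↑X) σ) - pe G (Reg G X) σ
def sdeg (σ : V → Bool) (x : V) : ℤ := (((Nfin G x).filter (fun y => σ y = σ x)).card : ℤ)
def ddeg (σ : V → Bool) (x : V) : ℤ := (((Nfin G x).filter (fun y => σ y ≠ σ x)).card : ℤ)
def Psi (Sf X : Finset V) (σ : V → Bool) : ℤ :=
  pe G (Reg G X) (flp (↑(Sf ∪ X)) σ) - pe G (Reg G X) (flp (↑Sf) σ)

lemma pe_congr {R : Finset V} {σ₁ σ₂ : V → Bool} (h : ∀ x ∈ R, σ₁ x = σ₂ x) :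
    pe G R σ₁ = pe G R σ₂ := by
  unfold pe
  apply Finset.sum_congr rfl
  rintro ⟨x, y⟩ hxy
  rw [Finset.mem_product] at hxy
  simp only [FF, h x hxy.1, h y hxy.2]

lemma pe_sub_region {R₁ R₂ : Finset V} (hR : R₁ ⊆ R₂) {σ₁ σ₂ : V → Bool}
    (hsupp : ∀ x y : V, G.Adj x y → ¬(x ∈ R₁ ∧ y ∈ R₁) → σ₁ x = σ₂ x ∧ σ₁ y = σ₂ y) :
    pe G R₂ σ₁ - pe G R₂ σ₂ = pe G R₁ σ₁ - pe G R₁ σ₂ := by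
  unfold pe
  rw [← Finset.sum_sub_distrib, ← Finset.sum_sub_distrib]
  refine (Finset.sum_subset (Finset.product_subset_product hR hR) ?_).symm
  rintro ⟨x, y⟩ hxy hnot
  rw [Finset.mem_product] at hxy
  simp only [FF]
  by_cases hadj : G.Adj x y
  · have hn : ¬(x ∈ R₁ ∧ y ∈ R₁) := fun hc => hnot (Finset.mem_product.2 ⟨hc.1, hc.2⟩)
    obtain ⟨h1, h2⟩ := hsupp x y hadj hn
    simp [hadj, h1, h2]
  · simp [hadj]

lemma mem_Reg_self {X : Finset V} {x : V} (h : x ∈ X) : x ∈ Reg G X :=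
  Finset.mem_union_left _ h

lemma mem_Reg_nb {X : Finset V} {x y : V} (h : x ∈ X) (hfin : (G.neighborSet x).Finite)
    (hadj : G.Adj x y) : y ∈ Reg G X :=
  Finset.mem_union_right _ (Finset.mem_biUnion.2 ⟨x, h, (mem_Nfin G hfin).2 hadj⟩)

lemma Reg_mono {X Y : Finset V} (h : X ⊆ Y) : Reg G X ⊆ Reg G Y := by
  apply Finset.union_subset_union h
  exact Finset.biUnion_subset_biUnion_of_subset_left _ h

/-- Key step lemma: effect of adding one flip. -/
lemma Psi_insert (σ : V → Bool) (Sf X : Finset V) {d : V}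
    (hd : (G.neighborSet d).Finite) (hdX : d ∉ X) (hdS : d ∉ Sf)
    (hXfin : ∀ x ∈ X, (G.neighborSet x).Finite) :
    Psi G Sf (insert d X) σ
      = Psi G Sf X σ
        + 2 * (ddeg G (flp (↑(Sf ∪ X)) σ) d - sdeg G (flp (↑(Sf ∪ X)) σ) d) := by
  set τ : V → Bool := flp (↑(Sf ∪ X)) σ with hτ
  set τ' : V → Bool := flp (↑(Sf ∪ insert d X)) σ with hτ'
  set τ0 : V → Bool := flp (↑Sf) σ with hτ0
  set R₂ : Finset V := Reg G (insert d X) with hR₂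
  have hXR : Reg G X ⊆ R₂ := Reg_mono G (Finset.subset_insert d X)
  -- τ' = flip τ at d
  have hτ'd : ∀ z : V, τ' z = if z = d then !(τ z) else τ z := by
    intro z
    by_cases hz : z = d
    · have h1 : z ∈ (↑(Sf ∪ insert d X) : Set V) := by
        simp [Finset.mem_union, hz]
      have h2 : z ∉ (↑(Sf ∪ X) : Set V) := by
        simp [Finset.mem_union, hz, hdX, hdS]
      rw [if_pos hz, hτ', hτ, flp_mem h1, flp_notMem h2]
    · have : z ∈ (↑(Sf ∪ insert d X) : Set V) ↔ z ∈ (↑(Sf ∪ X) : Set V) := by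
        simp [Finset.mem_union, Finset.mem_insert, hz]
      simp only [if_neg hz]
      rw [hτ', hτ]
      unfold flp
      by_cases hmem : z ∈ (↑(Sf ∪ X) : Set V)
      · rw [if_pos (this.2 hmem), if_pos hmem]
      · rw [if_neg (fun hc => hmem (this.1 hc)), if_neg hmem]
  -- difference only at X-vertices for τ vs τ0
  have hagree : ∀ z : V, z ∉ X → τ z = τ0 z := by
    intro z hz
    rw [hτ, hτ0]
    unfold flp
    by_cases hmem : z ∈ Sf
    · rw [if_pos (by simp [Finset.mem_union, hmem]), if_pos (by simp [hmem])]
    · rw [if_neg (by simp [Finset.mem_union, hmem, hz]), if_neg (by simp [hmem])]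
  -- Psi over larger region
  have hPsiX : Psi G Sf X σ = pe G R₂ τ - pe G R₂ τ0 := by
    unfold Psi
    rw [← hτ, ← hτ0]
    refine (pe_sub_region G hXR ?_).symm
    intro x y hadj hnot
    constructor
    · apply hagree
      intro hx
      exact hnot ⟨mem_Reg_self G hx, mem_Reg_nb G hx (hXfin x hx) hadj⟩
    · apply hagree
      intro hy
      exact hnot ⟨mem_Reg_nb G hy (hXfin y hy) hadj.symm, mem_Reg_self G hy⟩
  have hPsiX' : Psi G Sf (insert d X) σ = pe G R₂ τ' - pe G R₂ τ0 := rfl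
  have hdR : d ∈ R₂ := mem_Reg_self G (Finset.mem_insert_self d X)
  have hNdR : Nfin G d ⊆ R₂ := by
    intro y hy
    exact mem_Reg_nb G (Finset.mem_insert_self d X) hd ((mem_Nfin G hd).1 hy)
  -- the difference function
  set k : V × V → ℤ := fun p => FF G τ' p - FF G τ p with hk
  have hk0 : ∀ p : V × V, p.1 ≠ d → p.2 ≠ d → k p = 0 := by
    rintro ⟨x, y⟩ hx hy
    simp only [hk, FF]
    by_cases hadj : G.Adj x y
    · rw [hτ'd x, hτ'd y, if_neg hx, if_neg hy]
      simp
    · simp [hadj]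
  have hmain : pe G R₂ τ' - pe G R₂ τ = ∑ p ∈ R₂ ×ˢ R₂, k p := by
    unfold pe
    rw [← Finset.sum_sub_distrib]
  have hext : ∑ p ∈ R₂ ×ˢ R₂, k p = ∑ y ∈ Nfin G d, (k (d, y) + k (y, d)) := by
    rw [Finset.sum_product]
    have h1 : ∀ x ∈ R₂, (∑ y ∈ R₂, k (x, y))
        = if x = d then ∑ y ∈ R₂, k (d, y) else k (x, d) := by
      intro x hx
      by_cases hxd : x = d
      · subst hxd; rw [if_pos rfl]
      · rw [if_neg hxd]
        exact Finset.sum_eq_single_of_mem d hdR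
          (fun b hb hbd => hk0 (x, b) hxd hbd)
    rw [Finset.sum_congr rfl h1, ← Finset.add_sum_erase _ _ hdR, if_pos rfl]
    have h2 : ∑ x ∈ R₂.erase d, (if x = d then ∑ y ∈ R₂, k (d, y) else k (x, d))
        = ∑ x ∈ R₂.erase d, k (x, d) := by
      apply Finset.sum_congr rfl
      intro x hx
      rw [if_neg (Finset.ne_of_mem_erase hx)]
    rw [h2]
    have h3 : ∑ y ∈ R₂, k (d, y) = ∑ y ∈ Nfin G d, k (d, y) := by
      refine (Finset.sum_subset hNdR ?_).symm
      intro y hy hyn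
      have hadj : ¬ G.Adj d y := fun hc => hyn ((mem_Nfin G hd).2 hc)
      simp [hk, FF, hadj]
    have h4 : ∑ x ∈ R₂.erase d, k (x, d) = ∑ x ∈ Nfin G d, k (x, d) := by
      refine (Finset.sum_subset ?_ ?_).symm
      · intro x hx
        have hadj := (mem_Nfin G hd).1 hx
        exact Finset.mem_erase.2 ⟨(G.ne_of_adj hadj).symm, hNdR hx⟩
      · intro x hx hxn
        have hadj : ¬ G.Adj x d := fun hc => hxn ((mem_Nfin G hd).2 hc.symm)
        simp [hk, FF, hadj]
    rw [h3, h4, Finset.sum_add_distrib]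
  have hterm : ∀ y ∈ Nfin G d,
      k (d, y) + k (y, d) = 2 * (indEq (!(τ d)) (τ y) - indEq (τ d) (τ y)) := by
    intro y hy
    have hadj : G.Adj d y := (mem_Nfin G hd).1 hy
    have hyd : y ≠ d := fun hc => (G.ne_of_adj hadj).symm (hc ▸ rfl)
    have hτ'y : τ' y = τ y := by rw [hτ'd y, if_neg hyd]
    have hτ'dd : τ' d = !(τ d) := by rw [hτ'd d, if_pos rfl]
    simp only [hk, FF, hadj, hadj.symm, if_pos, hτ'y, hτ'dd]
    rw [indEq_comm (τ y) (!(τ d)), indEq_comm (τ y) (τ d)]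
    ring
  have hsum2 : ∑ y ∈ Nfin G d, (indEq (!(τ d)) (τ y) - indEq (τ d) (τ y))
      = ddeg G τ d - sdeg G τ d := by
    rw [Finset.sum_sub_distrib]
    congr 1
    · unfold ddeg
      rw [Finset.card_filter]
      push_cast
      apply Finset.sum_congr rfl
      intro y hy
      simp only [indEq]
      cases h1 : τ y <;> cases h2 : τ d <;> simp [h1, h2]
    · unfold sdeg
      rw [Finset.card_filter]
      push_cast
      apply Finset.sum_congr rfl
      intro y hy
      simp only [indEq]
      cases h1 : τ y <;> cases h2 : τ d <;> simp [h1, h2]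
  calc Psi G Sf (insert d X) σ
      = pe G R₂ τ' - pe G R₂ τ0 := hPsiX'
    _ = (pe G R₂ τ - pe G R₂ τ0) + (pe G R₂ τ' - pe G R₂ τ) := by ring
    _ = Psi G Sf X σ + ∑ p ∈ R₂ ×ˢ R₂, k p := by rw [hPsiX, hmain]
    _ = Psi G Sf X σ + ∑ y ∈ Nfin G d, (k (d, y) + k (y, d)) := by rw [hext]
    _ = Psi G Sf X σ + ∑ y ∈ Nfin G d, 2 * (indEq (!(τ d)) (τ y) - indEq (τ d) (τ y)) := by
        rw [Finset.sum_congr rfl hterm]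
    _ = Psi G Sf X σ + 2 * (ddeg G τ d - sdeg G τ d) := by
        rw [← Finset.mul_sum, hsum2]

/-- classical indicator of a proposition -/
def indP (p : Prop) : ℤ := if p then 1 else 0

lemma indP_pos {p : Prop} (h : p) : indP p = 1 := if_pos h
lemma indP_neg {p : Prop} (h : ¬ p) : indP p = 0 := if_neg h
lemma indP_nonneg (p : Prop) : 0 ≤ indP p := by
  by_cases h : p
  · rw [indP_pos h]; norm_num
  · rw [indP_neg h]

lemma indP_mono {p q : Prop} (h : p → q) : indP p ≤ indP q := by
  by_cases hp : p
  · rw [indP_pos hp, indP_pos (h hp)]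
  · rw [indP_neg hp]; exact indP_nonneg q

lemma sum_indP_le_card (s t : Finset V) : ∑ a ∈ s, indP (a ∈ t) ≤ (t.card : ℤ) := by
  have key : ∀ s : Finset V, ∑ a ∈ s, indP (a ∈ t) = ((s ∩ t).card : ℤ) := by
    intro s
    induction s using Finset.induction_on with
    | empty => simp
    | @insert a s ha ih =>
        rw [Finset.sum_insert ha, ih]
        by_cases hat : a ∈ t
        · rw [indP_pos hat, Finset.insert_inter_of_mem hat,
            Finset.card_insert_of_notMem (fun hc => ha (Finset.mem_inter.1 hc).1)]
          push_cast; ring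
        · rw [indP_neg hat, Finset.insert_inter_of_notMem hat, zero_add]
  rw [key s]
  exact_mod_cast Nat.cast_le.2 (Finset.card_le_card (Finset.inter_subset_right))

/-- Lower bound for the potential in terms of the local-minimality defect. -/
lemma Psi_lower (σ : V → Bool) (Sf X : Finset V) (O : V → Finset V)
    (hXfin : ∀ x ∈ X, (G.neighborSet x).Finite)
    (hXS : ∀ x ∈ X, x ∉ Sf)
    (hO : ∀ v ∈ Sf, ∀ w : V, G.Adj v w → σ w ≠ σ v → w ∈ O v) :
    dlt G X σ - 4 * (∑ v ∈ Sf, ((O v).card : ℤ)) ≤ Psi G Sf X σ := by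
  set τX : V → Bool := flp (↑(Sf ∪ X)) σ with hτX
  set τ0 : V → Bool := flp (↑Sf) σ with hτ0
  set σX : V → Bool := flp (↑X) σ with hσX
  set R : Finset V := Reg G X with hR
  set gp : V × V → ℤ := fun p => FF G τX p - FF G τ0 p - (FF G σX p - FF G σ p) with hgp
  set c1 : V × V → Prop := fun p => p.2 ∈ Sf ∧ p.1 ∈ X ∧ G.Adj p.2 p.1 ∧ σ p.1 ≠ σ p.2 with hc1
  set c2 : V × V → Prop := fun p => p.1 ∈ Sf ∧ p.2 ∈ X ∧ G.Adj p.1 p.2 ∧ σ p.2 ≠ σ p.1 with hc2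
  -- evaluations
  have hvX : ∀ z ∈ X, τX z = !(σ z) ∧ τ0 z = σ z ∧ σX z = !(σ z) := by
    intro z hz
    refine ⟨flp_mem ?_, flp_notMem ?_, flp_mem ?_⟩ <;>
      simp [Finset.mem_union, hz, hXS z hz]
  have hvS : ∀ z ∈ Sf, τX z = !(σ z) ∧ τ0 z = !(σ z) ∧ σX z = σ z := by
    intro z hz
    have hzX : z ∉ X := fun hc => hXS z hc hz
    refine ⟨flp_mem ?_, flp_mem ?_, flp_notMem ?_⟩ <;>
      simp [Finset.mem_union, hz, hzX]
  have hvN : ∀ z, z ∉ X → z ∉ Sf → τX z = σ z ∧ τ0 z = σ z ∧ σX z = σ z := by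
    intro z hz1 hz2
    refine ⟨flp_notMem ?_, flp_notMem ?_, flp_notMem ?_⟩ <;>
      simp [Finset.mem_union, hz1, hz2]
  -- pointwise bound
  have hpt : ∀ p : V × V, -2 * indP (c1 p) - 2 * indP (c2 p) ≤ gp p := by
    rintro ⟨x, y⟩
    by_cases hadj : G.Adj x y
    · have hFF : ∀ ρ : V → Bool, FF G ρ (x, y) = indEq (ρ x) (ρ y) := by
        intro ρ; simp [FF, hadj]
      simp only [hgp, hFF, hc1, hc2]
      by_cases hx1 : x ∈ X
      · obtain ⟨ex1, ex2, ex3⟩ := hvX x hx1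
        by_cases hy1 : y ∈ X
        · obtain ⟨ey1, ey2, ey3⟩ := hvX y hy1
          simp only [ex1, ex2, ex3, ey1, ey2, ey3]
          cases σ x <;> cases σ y <;> simp [indP, indEq, hXS x hx1, hXS y hy1] <;> norm_num
        · by_cases hy2 : y ∈ Sf
          · obtain ⟨ey1, ey2, ey3⟩ := hvS y hy2
            simp only [ex1, ex2, ex3, ey1, ey2, ey3]
            cases σ x <;> cases σ y <;>
              simp [indP, indEq, hXS x hx1, hy2, hx1, hadj, hadj.symm] <;> norm_num
          · obtain ⟨ey1, ey2, ey3⟩ := hvN y hy1 hy2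
            simp only [ex1, ex2, ex3, ey1, ey2, ey3]
            cases σ x <;> cases σ y <;> simp [indP, indEq, hXS x hx1, hy2] <;> norm_num
      · by_cases hx2 : x ∈ Sf
        · obtain ⟨ex1, ex2, ex3⟩ := hvS x hx2
          by_cases hy1 : y ∈ X
          · obtain ⟨ey1, ey2, ey3⟩ := hvX y hy1
            simp only [ex1, ex2, ex3, ey1, ey2, ey3]
            cases σ x <;> cases σ y <;>
              simp [indP, indEq, hXS y hy1, hx2, hy1, hadj, hadj.symm] <;> norm_num
          · by_cases hy2 : y ∈ Sf
            · obtain ⟨ey1, ey2, ey3⟩ := hvS y hy2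
              simp only [ex1, ex2, ex3, ey1, ey2, ey3]
              cases σ x <;> cases σ y <;> simp [indP, indEq, hx1, hy1] <;> norm_num
            · obtain ⟨ey1, ey2, ey3⟩ := hvN y hy1 hy2
              simp only [ex1, ex2, ex3, ey1, ey2, ey3]
              cases σ x <;> cases σ y <;> simp [indP, indEq, hx1, hy1] <;> norm_num
        · obtain ⟨ex1, ex2, ex3⟩ := hvN x hx1 hx2
          by_cases hy1 : y ∈ X
          · obtain ⟨ey1, ey2, ey3⟩ := hvX y hy1
            simp only [ex1, ex2, ex3, ey1, ey2, ey3]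
            cases σ x <;> cases σ y <;> simp [indP, indEq, hx1, hx2, hXS y hy1] <;> norm_num
          · by_cases hy2 : y ∈ Sf
            · obtain ⟨ey1, ey2, ey3⟩ := hvS y hy2
              simp only [ex1, ex2, ex3, ey1, ey2, ey3]
              cases σ x <;> cases σ y <;> simp [indP, indEq, hx1, hx2] <;> norm_num
            · obtain ⟨ey1, ey2, ey3⟩ := hvN y hy1 hy2
              simp only [ex1, ex2, ex3, ey1, ey2, ey3]
              cases σ x <;> cases σ y <;> simp [indP, indEq, hx1, hx2] <;> norm_num
    · have hadj' : ¬ G.Adj y x := fun hc => hadj hc.symm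
      simp [hgp, FF, hadj, hc1, hc2, hadj', indP]
  -- summing up
  have hsum : Psi G Sf X σ - dlt G X σ = ∑ p ∈ R ×ˢ R, gp p := by
    simp only [Psi, dlt, pe, hgp, ← hR]
    rw [← Finset.sum_sub_distrib, ← Finset.sum_sub_distrib, ← Finset.sum_sub_distrib]
  have haux : ∀ c : V × V → Prop, (∀ a b : V, c (a, b) → b ∈ Sf ∧ a ∈ O b) →
      ∑ a ∈ R, ∑ b ∈ R, indP (c (a, b)) ≤ ∑ v ∈ Sf, ((O v).card : ℤ) := by
    intro c hc
    calc ∑ a ∈ R, ∑ b ∈ R, indP (c (a, b))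
        ≤ ∑ a ∈ R, ∑ b ∈ R, indP (b ∈ Sf ∧ a ∈ O b) :=
          Finset.sum_le_sum (fun a _ => Finset.sum_le_sum
            (fun b _ => indP_mono (hc a b)))
      _ = ∑ b ∈ R, ∑ a ∈ R, indP (b ∈ Sf ∧ a ∈ O b) := Finset.sum_comm
      _ ≤ ∑ b ∈ R, (if b ∈ Sf then ((O b).card : ℤ) else 0) := by
          apply Finset.sum_le_sum
          intro b hb
          by_cases hbS : b ∈ Sf
          · rw [if_pos hbS]
            have h1 : ∀ a ∈ R, indP (b ∈ Sf ∧ a ∈ O b) = indP (a ∈ O b) := by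
              intro a ha
              by_cases h2 : a ∈ O b
              · rw [indP_pos ⟨hbS, h2⟩, indP_pos h2]
              · rw [indP_neg (fun hc2 => h2 hc2.2), indP_neg h2]
            rw [Finset.sum_congr rfl h1]
            exact sum_indP_le_card R (O b)
          · rw [if_neg hbS]
            have h1 : ∀ a ∈ R, indP (b ∈ Sf ∧ a ∈ O b) = 0 := by
              intro a ha
              exact indP_neg (fun hc2 => hbS hc2.1)
            rw [Finset.sum_congr rfl h1, Finset.sum_const, smul_zero]
      _ = ∑ b ∈ R.filter (fun b => b ∈ Sf), ((O b).card : ℤ) := (Finset.sum_filter _ _).symm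
      _ ≤ ∑ v ∈ Sf, ((O v).card : ℤ) := by
          apply Finset.sum_le_sum_of_subset_of_nonneg
          · intro b hb; exact (Finset.mem_filter.1 hb).2
          · intro v _ _; positivity
  have hb1 : ∑ p ∈ R ×ˢ R, indP (c1 p) ≤ ∑ v ∈ Sf, ((O v).card : ℤ) := by
    rw [Finset.sum_product]
    refine haux c1 ?_
    rintro a b ⟨h1, h2, h3, h4⟩
    exact ⟨h1, hO b h1 a h3 h4⟩
  have hb2 : ∑ p ∈ R ×ˢ R, indP (c2 p) ≤ ∑ v ∈ Sf, ((O v).card : ℤ) := by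
    rw [Finset.sum_product, Finset.sum_comm]
    have hiff : ∀ a b : V, c2 (b, a) = c1 (a, b) := fun _ _ => rfl
    simp only [hiff]
    refine haux c1 ?_
    rintro a b ⟨h1, h2, h3, h4⟩
    exact ⟨h1, hO b h1 a h3 h4⟩
  have hptsum : (∑ p ∈ R ×ˢ R, (-2 * indP (c1 p) - 2 * indP (c2 p)))
      ≤ ∑ p ∈ R ×ˢ R, gp p :=
    Finset.sum_le_sum (fun p _ => hpt p)
  rw [Finset.sum_sub_distrib, ← Finset.mul_sum, ← Finset.mul_sum] at hptsum
  linarith [hsum, hb1, hb2, hptsum]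


lemma Psi_empty (σ : V → Bool) (Sf : Finset V) : Psi G Sf ∅ σ = 0 := by
  simp [Psi, Reg, pe]

/-- One repair step: flipping an unhappy finite-degree vertex decreases the potential by ≥ 2. -/
lemma repair_step (σ : V → Bool) (Sf : Finset V) (D : Set V)
    (hDfin : ∀ x ∈ D, (G.neighborSet x).Finite)
    (hDS : ∀ x ∈ D, x ∉ Sf)
    (X : Finset V) (hX : ↑X ⊆ D) {d : V} (hdD : d ∈ D)
    (hdun : ddeg G (flp (↑(Sf ∪ X)) σ) d < sdeg G (flp (↑(Sf ∪ X)) σ) d) :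
    ∃ X' : Finset V, ↑X' ⊆ D ∧ Psi G Sf X' σ ≤ Psi G Sf X σ - 2 := by
  have hd : (G.neighborSet d).Finite := hDfin d hdD
  have hdS : d ∉ Sf := hDS d hdD
  set τ : V → Bool := flp (↑(Sf ∪ X)) σ with hτ
  by_cases hdX : d ∈ X
  · -- remove d
    refine ⟨X.erase d, ?_, ?_⟩
    · intro x hx
      exact hX (Finset.mem_coe.2 (Finset.erase_subset d X (Finset.mem_coe.1 hx)))
    · set τ₂ : V → Bool := flp (↑(Sf ∪ X.erase d)) σ with hτ₂
      have hins := Psi_insert G σ Sf (X.erase d) hd (Finset.notMem_erase d X) hdS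
        (fun x hx => hDfin x (hX (Finset.erase_subset d X hx)))
      rw [Finset.insert_erase hdX] at hins
      -- τ₂ agrees with τ off d, and τ₂ d = !(τ d)
      have hagree : ∀ y : V, y ≠ d → τ₂ y = τ y := by
        intro y hy
        rw [hτ₂, hτ]
        unfold flp
        have : y ∈ (↑(Sf ∪ X.erase d) : Set V) ↔ y ∈ (↑(Sf ∪ X) : Set V) := by
          simp [Finset.mem_union, Finset.mem_erase, hy]
        by_cases hmem : y ∈ (↑(Sf ∪ X) : Set V)
        · rw [if_pos (this.2 hmem), if_pos hmem]
        · rw [if_neg (fun hc => hmem (this.1 hc)), if_neg hmem]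
      have hdval : τ₂ d = !(τ d) := by
        have h1 : τ d = !(σ d) := flp_mem (by simp [Finset.mem_union, hdX])
        have h2 : τ₂ d = σ d := flp_notMem (by simp [Finset.mem_union, hdS])
        rw [h1, h2, Bool.not_not]
      have hyd' : ∀ y ∈ Nfin G d, y ≠ d := by
        intro y hy hc
        exact (G.ne_of_adj ((mem_Nfin G hd).1 hy)).symm (hc ▸ rfl)
      have hdd : ddeg G τ₂ d = sdeg G τ d := by
        unfold ddeg sdeg
        have hfil : (Nfin G d).filter (fun y => τ₂ y ≠ τ₂ d)
            = (Nfin G d).filter (fun y => τ y = τ d) := by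
          apply Finset.filter_congr
          intro y hy
          rw [hagree y (hyd' y hy), hdval]
          cases τ y <;> cases τ d <;> simp
        rw [hfil]
      have hsd : sdeg G τ₂ d = ddeg G τ d := by
        unfold ddeg sdeg
        have hfil : (Nfin G d).filter (fun y => τ₂ y = τ₂ d)
            = (Nfin G d).filter (fun y => τ y ≠ τ d) := by
          apply Finset.filter_congr
          intro y hy
          rw [hagree y (hyd' y hy), hdval]
          cases τ y <;> cases τ d <;> simp
        rw [hfil]
      rw [hdd, hsd] at hins
      linarith [hins, hdun]
  · -- insert d
    refine ⟨insert d X, ?_, ?_⟩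
    · intro x hx
      rcases Finset.mem_insert.1 (Finset.mem_coe.1 hx) with h | h
      · exact h ▸ hdD
      · exact hX (Finset.mem_coe.2 h)
    · have hins := Psi_insert G σ Sf X hd hdX hdS (fun x hx => hDfin x (hX hx))
      rw [hins]
      linarith [hdun]

/-- The repair process terminates, yielding a colouring where all of `D` is happy. -/
lemma repair (σ : V → Bool) (Sf : Finset V) (D : Set V) (O : V → Finset V)
    (hDfin : ∀ x ∈ D, (G.neighborSet x).Finite)
    (hDS : ∀ x ∈ D, x ∉ Sf)
    (hmin : ∀ X : Finset V, ↑X ⊆ D → 0 ≤ dlt G X σ)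
    (hO : ∀ v ∈ Sf, ∀ w : V, G.Adj v w → σ w ≠ σ v → w ∈ O v) :
    ∃ X : Finset V, ↑X ⊆ D ∧ ∀ d ∈ D,
      sdeg G (flp (↑(Sf ∪ X)) σ) d ≤ ddeg G (flp (↑(Sf ∪ X)) σ) d := by
  set M : ℤ := ∑ v ∈ Sf, ((O v).card : ℤ) with hM
  have hM0 : 0 ≤ M := Finset.sum_nonneg (fun v _ => by positivity)
  have hlow : ∀ X : Finset V, ↑X ⊆ D → -(4 * M) ≤ Psi G Sf X σ := by
    intro X hX
    have h1 := Psi_lower G σ Sf X O (fun x hx => hDfin x (hX hx))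
      (fun x hx => hDS x (hX hx)) hO
    have h2 := hmin X hX
    rw [← hM] at h1
    linarith
  have main : ∀ n : ℕ, ∀ X : Finset V, ↑X ⊆ D →
      Psi G Sf X σ + 4 * M ≤ 2 * n →
      ∃ X' : Finset V, ↑X' ⊆ D ∧ ∀ d ∈ D,
        sdeg G (flp (↑(Sf ∪ X')) σ) d ≤ ddeg G (flp (↑(Sf ∪ X')) σ) d := by
    intro n
    induction n with
    | zero =>
        intro X hX hbound
        refine ⟨X, hX, ?_⟩
        by_contra hcon
        push_neg at hcon
        obtain ⟨d, hdD, hdun⟩ := hcon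
        obtain ⟨X', hX', hdec⟩ := repair_step G σ Sf D hDfin hDS X hX hdD hdun
        have := hlow X' hX'
        norm_num at hbound
        linarith
    | succ n ih =>
        intro X hX hbound
        by_cases hhap : ∀ d ∈ D,
            sdeg G (flp (↑(Sf ∪ X)) σ) d ≤ ddeg G (flp (↑(Sf ∪ X)) σ) d
        · exact ⟨X, hX, hhap⟩
        · push_neg at hhap
          obtain ⟨d, hdD, hdun⟩ := hhap
          obtain ⟨X', hX', hdec⟩ := repair_step G σ Sf D hDfin hDS X hX hdD hdun
          refine ih X' hX' ?_
          push_cast at hbound ⊢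
          linarith
  refine main (4 * M).toNat ∅ (by simp) ?_
  rw [Psi_empty, zero_add]
  rcases Int.le_total 0 (4 * M) with h | h
  · rw [Int.toNat_of_nonneg (by linarith : (0:ℤ) ≤ 4 * M)]
    push_cast
    linarith
  · linarith [Int.toNat_of_nonneg (by linarith : (0:ℤ) ≤ 4*M)]


lemma pe_nonneg (R : Finset V) (g : V → Bool) : 0 ≤ pe G R g := by
  apply Finset.sum_nonneg
  intro p hp
  unfold FF indEq
  by_cases h1 : G.Adj p.1 p.2
  · rw [if_pos h1]
    by_cases h2 : g p.1 = g p.2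
    · rw [if_pos h2]; norm_num
    · rw [if_neg h2]
  · rw [if_neg h1]

/-- Existence of a "locally minimal" colouring extending `π`. -/
lemma exists_locmin [Countable V] (U : Set V) (π : U → Bool) :
    ∃ σ : V → Bool, (∀ u : V, ∀ hu : u ∈ U, σ u = π ⟨u, hu⟩) ∧
      ∀ X : Finset V, (∀ x ∈ X, x ∉ U ∧ (G.neighborSet x).Finite) → 0 ≤ dlt G X σ := by
  obtain ⟨f, hf⟩ : ∃ f : V → ℕ, Function.Injective f := exists_injective_nat V
  -- stage sets
  have hSk : ∀ k : ℕ, (f ⁻¹' (Set.Iio k)).Finite :=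
    fun k => Set.Finite.preimage hf.injOn (Set.finite_Iio k)
  set Sk : ℕ → Finset V := fun k => (hSk k).toFinset with hSkdef
  have hmemSk : ∀ k x, x ∈ Sk k ↔ f x < k := by
    intro k x
    simp [hSkdef, Set.Finite.mem_toFinset]
  -- admissibility
  set Adm : (V → Bool) → Prop := fun g => ∀ u : V, ∀ hu : u ∈ U, g u = π ⟨u, hu⟩ with hAdm
  have hg0 : Adm (fun x => if hx : x ∈ U then π ⟨x, hx⟩ else true) := by
    intro u hu
    simp [hu]
  -- minimizers at each stage
  have hex : ∀ k : ℕ, ∃ g : V → Bool, Adm g ∧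
      ∀ g' : V → Bool, Adm g' → pe G (Sk k) g ≤ pe G (Sk k) g' := by
    intro k
    set T : Set ℕ := {n : ℕ | ∃ g : V → Bool, Adm g ∧ (pe G (Sk k) g).toNat = n} with hT
    have hTne : T.Nonempty := ⟨_, _, hg0, rfl⟩
    obtain ⟨g, hgA, hgE⟩ := Nat.sInf_mem hTne
    refine ⟨g, hgA, ?_⟩
    intro g' hg'
    have h1 : sInf T ≤ (pe G (Sk k) g').toNat := Nat.sInf_le ⟨g', hg', rfl⟩
    rw [← hgE] at h1
    have h2 := pe_nonneg G (Sk k) g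
    have h3 := pe_nonneg G (Sk k) g'
    omega
  choose pk hpkA hpkM using hex
  -- ultrafilter limit
  set 𝒰 : Ultrafilter ℕ := Ultrafilter.of Filter.atTop with h𝒰
  set σ : V → Bool := fun x => if {k : ℕ | pk k x = true} ∈ 𝒰 then true else false with hσdef
  have hσ : ∀ x : V, {k : ℕ | pk k x = σ x} ∈ 𝒰 := by
    intro x
    by_cases h : {k : ℕ | pk k x = true} ∈ 𝒰
    · have : σ x = true := by rw [hσdef]; simp [h]
      rw [this]; exact h
    · have hval : σ x = false := by rw [hσdef]; simp [h]
      rw [hval]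
      have := (Ultrafilter.compl_mem_iff_notMem (s := {k : ℕ | pk k x = true})).2 h
      convert this using 1
      ext k
      simp [Set.mem_compl_iff]
    -- end
  have hWagree : ∀ W : Finset V, {k : ℕ | ∀ x ∈ W, pk k x = σ x} ∈ 𝒰 := by
    intro W
    induction W using Finset.induction_on with
    | empty =>
        simp only [Finset.notMem_empty, false_implies, implies_true, Set.setOf_true]
        exact Filter.univ_mem
    | @insert a W ha ih =>
        have : {k : ℕ | ∀ x ∈ insert a W, pk k x = σ x}
            = {k : ℕ | pk k a = σ a} ∩ {k : ℕ | ∀ x ∈ W, pk k x = σ x} := by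
          ext k
          simp [Finset.forall_mem_insert]
        rw [this]
        exact Filter.inter_mem (hσ a) ih
  have hne : ∀ s : Set ℕ, s ∈ 𝒰 → s.Nonempty := by
    intro s hs
    exact Ultrafilter.nonempty_of_mem hs
  -- admissibility of σ
  have hσA : ∀ u : V, ∀ hu : u ∈ U, σ u = π ⟨u, hu⟩ := by
    intro u hu
    obtain ⟨k, hk⟩ := hne _ (hσ u)
    rw [← hk]
    exact hpkA k u hu
  refine ⟨σ, hσA, ?_⟩
  -- local minimality
  intro X hXP
  set R : Finset V := Reg G X with hRdef
  have hXR : X ⊆ R := Finset.subset_union_left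
  set A2 : Set ℕ := {k : ℕ | R ⊆ Sk k} with hA2
  have hA2mem : A2 ∈ 𝒰 := by
    have hsub : {k : ℕ | R.sup f + 1 ≤ k} ⊆ A2 := by
      intro k hk
      simp only [Set.mem_setOf_eq] at hk
      intro x hx
      rw [hmemSk]
      have := Finset.le_sup (f := f) hx
      omega
    have hup : {k : ℕ | R.sup f + 1 ≤ k} ∈ 𝒰 :=
      (Ultrafilter.of_le Filter.atTop) (Filter.mem_atTop (R.sup f + 1))
    exact Filter.mem_of_superset hup hsub
  obtain ⟨k, hk1, hk2⟩ := hne _ (Filter.inter_mem (hWagree R) hA2mem)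
  -- transfer dlt from pk k to σ
  have hflpagree : ∀ z ∈ R, flp (↑X) σ z = flp (↑X) (pk k) z := by
    intro z hz
    unfold flp
    rw [hk1 z hz]
  have hdlt_eq : dlt G X σ = dlt G X (pk k) := by
    unfold dlt
    rw [← hRdef, pe_congr G hflpagree, pe_congr G hk1]
  rw [hdlt_eq]
  -- admissibility of the flip
  have hAdmflp : Adm (flp (↑X) (pk k)) := by
    intro u hu
    have huX : u ∉ X := fun hc => (hXP u hc).1 hu
    rw [flp_notMem (by simpa using huX)]
    exact hpkA k u hu
  have hmin := hpkM k (flp (↑X) (pk k)) hAdmflp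
  -- relate stage difference to dlt via region restriction
  have hregion : pe G (Sk k) (flp (↑X) (pk k)) - pe G (Sk k) (pk k)
      = pe G R (flp (↑X) (pk k)) - pe G R (pk k) := by
    apply pe_sub_region G hk2
    intro x y hadj hnot
    have hxX : x ∉ X := by
      intro hc
      exact hnot ⟨mem_Reg_self G hc, mem_Reg_nb G hc (hXP x hc).2 hadj⟩
    have hyX : y ∉ X := by
      intro hc
      exact hnot ⟨mem_Reg_nb G hc (hXP y hc).2 hadj.symm, mem_Reg_self G hc⟩
    exact ⟨flp_notMem (by simpa using hxX), flp_notMem (by simpa using hyX)⟩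
  unfold dlt
  rw [← hRdef, ← hregion]
  linarith [hmin]


end

end AMPProof

section Bridge

open AMPProof

attribute [local instance] Classical.propDecidable

variable {V : Type*} (G : SimpleGraph V)

lemma happy_of_finset {π' : V → Bool} {x : V} (h : (G.neighborSet x).Finite)
    (hle : sdeg G π' x ≤ ddeg G π' x) : Happy G π' x := by
  have hs : {y : V | G.Adj x y ∧ π' y = π' x}
      = ↑((Nfin G x).filter (fun y => π' y = π' x)) := by
    ext y
    simp [mem_Nfin G h, and_comm]
  have hd : {y : V | G.Adj x y ∧ π' y ≠ π' x}
      = ↑((Nfin G x).filter (fun y => π' y ≠ π' x)) := by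
    ext y
    simp [mem_Nfin G h, and_comm]
  unfold Happy
  rw [hs, hd]
  have hle' : ((Nfin G x).filter (fun y => π' y = π' x)).card
      ≤ ((Nfin G x).filter (fun y => π' y ≠ π' x)).card := by
    have := hle
    unfold sdeg ddeg at this
    exact_mod_cast this
  simp only [Finset.coe_sort_coe, Cardinal.mk_coe_finset]
  exact_mod_cast hle'

lemma happy_of_infinite [Countable V] {π' : V → Bool} {x : V}
    (h : {y : V | G.Adj x y ∧ π' y ≠ π' x}.Infinite) : Happy G π' x := by
  unfold Happy
  calc #{y : V | G.Adj x y ∧ π' y = π' x} ≤ Cardinal.aleph0 := Cardinal.mk_le_aleph0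
    _ ≤ #{y : V | G.Adj x y ∧ π' y ≠ π' x} :=
      Cardinal.aleph0_le_mk_iff.2 (Set.infinite_coe_iff.2 h)

lemma opp_finite_of_not_happy [Countable V] {π' : V → Bool} {x : V}
    (hx : ¬ Happy G π' x) : {y : V | G.Adj x y ∧ π' y ≠ π' x}.Finite := by
  by_contra h
  exact hx (happy_of_infinite G h)

lemma same_infinite_of_opp_finite {π' : V → Bool} {x : V}
    (hx : ¬ (G.neighborSet x).Finite)
    (h : {y : V | G.Adj x y ∧ π' y ≠ π' x}.Finite) :
    {y : V | G.Adj x y ∧ π' y = π' x}.Infinite := by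
  intro hc
  apply hx
  have hsplit : G.neighborSet x
      = {y : V | G.Adj x y ∧ π' y = π' x} ∪ {y : V | G.Adj x y ∧ π' y ≠ π' x} := by
    ext y
    simp only [SimpleGraph.mem_neighborSet, Set.mem_union, Set.mem_setOf_eq]
    tauto
  rw [hsplit]
  exact hc.union h

end Bridge

/-- Lemma of Aharoni, Milner and Prikry: if `G` is countable and only finitely many vertices
outside `U` have infinite degree, then every two-colouring of `U` extends to a two-colouring of
`G` in which every vertex outside `U` is happy. -/
theorem AMP_extension {V : Type*} [Countable V] (G : SimpleGraph V) (U : Set V)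
    (hfin : {v : V | v ∉ U ∧ (G.neighborSet v).Infinite}.Finite) (π : U → Bool) :
    ∃ π' : V → Bool, (∀ u : U, π' u = π u) ∧ ∀ v ∉ U, Happy G π' v := by
  classical
  open AMPProof in
  set D : Set V := {v | v ∉ U ∧ (G.neighborSet v).Finite} with hD
  obtain ⟨σ, hσA, hσmin⟩ := AMPProof.exists_locmin G U π
  set Fset : Finset V := hfin.toFinset with hFset
  set Sf : Finset V := Fset.filter (fun v => ¬ Happy G σ v) with hSf
  have hSfspec : ∀ v ∈ Sf, (v ∉ U ∧ (G.neighborSet v).Infinite) ∧ ¬ Happy G σ v := by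
    intro v hv
    rw [hSf, Finset.mem_filter, hFset, Set.Finite.mem_toFinset] at hv
    exact hv
  have hOex : ∀ v ∈ Sf, {w : V | G.Adj v w ∧ σ w ≠ σ v}.Finite := by
    intro v hv
    exact opp_finite_of_not_happy G (hSfspec v hv).2
  set O : V → Finset V := fun v =>
    if h : {w : V | G.Adj v w ∧ σ w ≠ σ v}.Finite then h.toFinset else ∅ with hO_def
  have hO : ∀ v ∈ Sf, ∀ w : V, G.Adj v w → σ w ≠ σ v → w ∈ O v := by
    intro v hv w h1 h2
    have hf2 := hOex v hv
    rw [hO_def]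
    simp only [dif_pos hf2, Set.Finite.mem_toFinset]
    exact ⟨h1, h2⟩
  have hDfin : ∀ x ∈ D, (G.neighborSet x).Finite := fun x hx => hx.2
  have hDS : ∀ x ∈ D, x ∉ Sf := by
    intro x hx hc
    exact (hSfspec x hc).1.2 hx.2
  have hmin : ∀ X : Finset V, ↑X ⊆ D → 0 ≤ dlt G X σ := by
    intro X hX
    apply hσmin
    intro x hx
    have := hX (Finset.mem_coe.2 hx)
    exact ⟨this.1, this.2⟩
  obtain ⟨X, hXD, hXhap⟩ := AMPProof.repair G σ Sf D O hDfin hDS hmin hO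
  set π' : V → Bool := AMPProof.flp (↑(Sf ∪ X)) σ with hπ'
  have hmemSfX : ∀ z : V, z ∈ (↑(Sf ∪ X) : Set V) ↔ z ∈ Sf ∨ z ∈ X := by
    intro z
    simp [Finset.mem_union]
  have hπ'not : ∀ z : V, z ∉ Sf → z ∉ X → π' z = σ z := by
    intro z h1 h2
    exact AMPProof.flp_notMem (fun hc => by rcases (hmemSfX z).1 hc with h | h <;> tauto)
  refine ⟨π', ?_, ?_⟩
  · intro u
    have h1 : (u : V) ∉ Sf := fun hc => (hSfspec u hc).1.1 u.2
    have h2 : (u : V) ∉ X := fun hc => (hXD (Finset.mem_coe.2 hc)).1 u.2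
    rw [hπ'not u h1 h2, hσA u u.2]
  · intro v hv
    by_cases hvfin : (G.neighborSet v).Finite
    · exact happy_of_finset G hvfin (hXhap v ⟨hv, hvfin⟩)
    · have hvF : v ∈ Fset := by
        rw [hFset, Set.Finite.mem_toFinset]
        exact ⟨hv, hvfin⟩
      have hvX : v ∉ X := fun hc => hvfin (hXD (Finset.mem_coe.2 hc)).2
      by_cases hvS : v ∈ Sf
      · -- v was unhappy in σ; its colour has been flipped
        have hoppfin := hOex v hvS
        have hsameinf := same_infinite_of_opp_finite G hvfin hoppfin
        apply happy_of_infinite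
        apply Set.Infinite.mono ?_ (hsameinf.diff (Finset.finite_toSet (Sf ∪ X)))
        rintro y ⟨⟨hadj, heq⟩, hnot⟩
        refine ⟨hadj, ?_⟩
        have h1 : π' y = σ y := by
          apply AMPProof.flp_notMem
          intro hc
          exact hnot (by simpa using (hmemSfX y).1 hc)
        have h2 : π' v = !(σ v) := AMPProof.flp_mem ((hmemSfX v).2 (Or.inl hvS))
        rw [h1, h2, heq]
        cases σ v <;> simp
      · -- v was happy in σ and keeps its colour
        have hhap : Happy G σ v := by
          by_contra hc
          exact hvS (by rw [hSf, Finset.mem_filter]; exact ⟨hvF, hc⟩)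
        have hdiffinf : {y : V | G.Adj v y ∧ σ y ≠ σ v}.Infinite := by
          by_contra hc
          have hoppfin := Set.not_infinite.1 hc
          have hsameinf := same_infinite_of_opp_finite G hvfin hoppfin
          have hcon : #{y : V | G.Adj v y ∧ σ y = σ v} ≤ #{y : V | G.Adj v y ∧ σ y ≠ σ v} :=
            hhap
          have h1 : #{y : V | G.Adj v y ∧ σ y ≠ σ v} < Cardinal.aleph0 :=
            hoppfin.lt_aleph0
          have h2 : Cardinal.aleph0 ≤ #{y : V | G.Adj v y ∧ σ y = σ v} :=
            Cardinal.aleph0_le_mk_iff.2 (Set.infinite_coe_iff.2 hsameinf)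
          exact absurd hcon (by push_neg; exact lt_of_lt_of_le h1 h2)
        apply happy_of_infinite
        apply Set.Infinite.mono ?_ (hdiffinf.diff (Finset.finite_toSet (Sf ∪ X)))
        rintro y ⟨⟨hadj, hne⟩, hnot⟩
        refine ⟨hadj, ?_⟩
        have h1 : π' y = σ y := by
          apply AMPProof.flp_notMem
          intro hc
          exact hnot (by simpa using (hmemSfX y).1 hc)
        have h2 : π' v = σ v := hπ'not v hvS hvX
        rw [h1, h2]
        exact hne
end

section
/- A countable graph G lies in the Schmidt closure of the class 𝒲 if and only if G contains no comb all of whose teeth lie in V*(G). -/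
open Cardinal

/-- The set of vertices of infinite degree in `G`. -/
def Vinf {V : Type*} (G : SimpleGraph V) : Set V := {v : V | (G.neighborSet v).Infinite}

/-- The set of vertices of infinite degree having only finitely many neighbours of infinite
degree. -/
def Vstar {V : Type*} (G : SimpleGraph V) : Set V :=
  {v : V | (G.neighborSet v).Infinite ∧ (G.neighborSet v ∩ Vinf G).Finite}

/-- `G` contains a comb with all teeth in `A`: a ray `r` together with infinitely many pairwise
disjoint finite paths, the `n`-th path going from the vertex `r (k n)` of the ray to a tooth
`t n ∈ A`, each path meeting the ray exactly in its first vertex. -/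
def HasCombWithTeethIn {V : Type*} (G : SimpleGraph V) (A : Set V) : Prop :=
  ∃ (r : ℕ → V) (k : ℕ → ℕ) (t : ℕ → V) (p : ∀ n : ℕ, G.Walk (r (k n)) (t n)),
    Function.Injective r ∧ (∀ n : ℕ, G.Adj (r n) (r (n + 1))) ∧
    StrictMono k ∧ (∀ n : ℕ, t n ∈ A) ∧ (∀ n : ℕ, (p n).IsPath) ∧
    (∀ m n : ℕ, m ≠ n → ∀ v : V, v ∈ (p m).support → v ∉ (p n).support) ∧
    (∀ n : ℕ, ∀ v ∈ (p n).support, (∃ i : ℕ, v = r i) → v = r (k n))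

universe u

/-- The class 𝒲 of countable graphs `G` with `Vstar G` finite. -/
def Wclass : GraphClass.{u} := fun V G => Countable V ∧ (Vstar G).Finite

namespace SchmidtAux

open SimpleGraph Set

theorem SchmidtLevel_iff (𝒰 : GraphClass.{u}) (μ : Ordinal.{u}) (V : Type u) (G : SimpleGraph V) :
    SchmidtLevel 𝒰 μ V G ↔ if μ = 0 then 𝒰 V G
    else ∃ S : Set V, S.Finite ∧
      ∀ C : (G.induce Sᶜ).ConnectedComponent,
        ∃ lam : Ordinal.{u}, ∃ _ : lam < μ, SchmidtLevel 𝒰 lam C.supp (CompGraph G S C) := by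
  rw [SchmidtLevel]

variable {V : Type*} {W : Type*} {G : SimpleGraph V} {H : SimpleGraph W}

/-- Iso between induced subgraphs corresponding under a graph isomorphism. -/
def isoOfSets {H' : SimpleGraph W} (e : G ≃g H') {A : Set V} {B : Set W}
    (h : ∀ w, w ∈ A ↔ e w ∈ B) : G.induce A ≃g H'.induce B where
  toFun := fun a => ⟨e a.1, (h a.1).mp a.2⟩
  invFun := fun b => ⟨e.symm b.1, (h _).mpr (by simpa using b.2)⟩
  left_inv := fun a => Subtype.ext (e.toEquiv.symm_apply_apply a.1)
  right_inv := fun b => Subtype.ext (e.toEquiv.apply_symm_apply b.1)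
  map_rel_iff' := by
    intro a b
    simp only [comap_adj, Function.Embedding.coe_subtype, Equiv.coe_fn_mk]
    exact e.map_rel_iff

@[simp] lemma isoOfSets_apply {H' : SimpleGraph W} (e : G ≃g H') {A : Set V} {B : Set W}
    (h : ∀ w, w ∈ A ↔ e w ∈ B) (a : A) :
    ((isoOfSets e h a : B) : W) = e a := rfl

/-- Flattening of a doubly-induced subgraph. -/
noncomputable def induceInduce (A : Set V) (B : Set A) :
    (G.induce A).induce B ≃g G.induce (Subtype.val '' B) where
  toEquiv := Equiv.ofBijective
    (fun b => ⟨b.1.1, ⟨b.1, b.2, rfl⟩⟩)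
    (by
      constructor
      · intro a b hab
        apply Subtype.ext; apply Subtype.ext
        exact Subtype.mk_eq_mk.mp hab
      · rintro ⟨v, ⟨a, ha, rfl⟩⟩
        exact ⟨⟨a, ha⟩, rfl⟩)
  map_rel_iff' := Iff.rfl

@[simp] lemma induceInduce_apply (A : Set V) (B : Set A) (b : B) :
    ((induceInduce (G := G) A B b : Subtype.val '' B) : V) = b.1.1 := rfl

/-- The valuation homomorphism from an induced subgraph. -/
def induceValHom (A : Set V) : G.induce A →g G where
  toFun := Subtype.val
  map_rel' := fun h => h

/-- Lift a walk with support inside `A` to the induced subgraph. -/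
def liftWalk {A : Set V} : ∀ {a b : V} (w : G.Walk a b)
    (hw : ∀ v ∈ w.support, v ∈ A),
    (G.induce A).Walk ⟨a, hw a w.start_mem_support⟩ ⟨b, hw b w.end_mem_support⟩
  | _, _, SimpleGraph.Walk.nil, _ => SimpleGraph.Walk.nil
  | a, b, SimpleGraph.Walk.cons h w, hw =>
      SimpleGraph.Walk.cons (by exact h : (G.induce A).Adj ⟨a, _⟩ ⟨_, _⟩)
        (liftWalk w (fun v hv => hw v (by simp [hv])))

lemma liftWalk_support {A : Set V} {a b : V} (w : G.Walk a b)
    (hw : ∀ v ∈ w.support, v ∈ A) :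
    (liftWalk w hw).support.map Subtype.val = w.support := by
  induction w with
  | nil => rfl
  | cons h w ih =>
    simp only [liftWalk, SimpleGraph.Walk.support_cons, List.map_cons, ih]
    exact congrArg (List.cons _) (ih _)

lemma mem_liftWalk_support {A : Set V} {a b : V} (w : G.Walk a b)
    (hw : ∀ v ∈ w.support, v ∈ A) (x : A) :
    x ∈ (liftWalk w hw).support ↔ (x : V) ∈ w.support := by
  rw [← liftWalk_support w hw, List.mem_map]
  constructor
  · intro hx; exact ⟨x, hx, rfl⟩
  · rintro ⟨y, hy, h⟩
    have : y = x := Subtype.ext h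
    rwa [this] at hy

lemma liftWalk_isPath {A : Set V} {a b : V} (w : G.Walk a b)
    (hw : ∀ v ∈ w.support, v ∈ A) (h : w.IsPath) : (liftWalk w hw).IsPath := by
  rw [SimpleGraph.Walk.isPath_def] at h ⊢
  rw [← liftWalk_support w hw] at h
  exact h.of_map

end SchmidtAux

namespace SchmidtAux

open SimpleGraph Set

variable {V : Type*} {W : Type*} {G : SimpleGraph V} {H : SimpleGraph W}

lemma neighborSet_image (e : G ≃g H) (v : V) :
    H.neighborSet (e v) = e '' G.neighborSet v := by
  ext w
  simp only [mem_neighborSet, Set.mem_image]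
  constructor
  · intro h
    refine ⟨e.symm w, ?_, e.apply_symm_apply w⟩
    have := e.symm.map_adj_iff.mpr h
    simpa using this
  · rintro ⟨u, hu, rfl⟩
    exact e.map_adj_iff.mpr hu

lemma vinf_image (e : G ≃g H) (v : V) : e v ∈ Vinf H ↔ v ∈ Vinf G := by
  unfold Vinf
  rw [Set.mem_setOf_eq, Set.mem_setOf_eq, neighborSet_image e v,
    Set.infinite_image_iff (e.injective.injOn)]

lemma vstar_image (e : G ≃g H) (v : V) : e v ∈ Vstar H ↔ v ∈ Vstar G := by
  unfold Vstar
  rw [Set.mem_setOf_eq, Set.mem_setOf_eq, neighborSet_image e v,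
    Set.infinite_image_iff (e.injective.injOn)]
  apply and_congr_right
  intro _
  have : e '' G.neighborSet v ∩ Vinf H = e '' (G.neighborSet v ∩ Vinf G) := by
    ext w
    constructor
    · rintro ⟨⟨u, hu, rfl⟩, h2⟩
      exact ⟨u, ⟨hu, (vinf_image e u).mp h2⟩, rfl⟩
    · rintro ⟨u, ⟨hu, h2⟩, rfl⟩
      exact ⟨⟨u, hu, rfl⟩, (vinf_image e u).mpr h2⟩
  rw [this, Set.finite_image_iff (e.injective.injOn)]

lemma wclass_iso {V W : Type u} {G : SimpleGraph V} {H : SimpleGraph W} (e : G ≃g H)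
    (h : Wclass V G) : Wclass W H := by
  obtain ⟨h1, h2⟩ := h
  refine ⟨e.toEquiv.symm.injective.countable, ?_⟩
  have : Vstar H = e '' Vstar G := by
    ext w
    constructor
    · intro hw
      exact ⟨e.symm w, by rw [← vstar_image e, e.apply_symm_apply]; exact hw,
        e.apply_symm_apply w⟩
    · rintro ⟨v, hv, rfl⟩
      exact (vstar_image e v).mpr hv
  rw [this]
  exact h2.image _

/-- Component supp correspondence along an iso. -/
lemma mem_supp_map_symm_iff (e : G ≃g H) (C' : H.ConnectedComponent) (v : V) :
    v ∈ (C'.map (e.symm.toHom : H →g G)).supp ↔ e v ∈ C'.supp := by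
  induction C' using SimpleGraph.ConnectedComponent.ind with
  | _ w =>
  simp only [SimpleGraph.ConnectedComponent.map_mk, SimpleGraph.ConnectedComponent.mem_supp_iff,
    SimpleGraph.ConnectedComponent.eq]
  constructor
  · intro h
    have := h.map (e.toHom)
    simpa using this
  · intro h
    have := h.map (e.symm.toHom)
    simpa using this

/-- Isomorphism invariance of `SchmidtLevel Wclass`. -/
lemma schmidtLevel_iso : ∀ (μ : Ordinal.{u}), ∀ {V W : Type u} {G : SimpleGraph V}
    {H : SimpleGraph W} (e : G ≃g H), SchmidtLevel Wclass μ V G → SchmidtLevel Wclass μ W H := by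
  intro μ
  induction μ using Ordinal.induction with
  | h μ IH =>
  intro V W G H e hG
  rw [SchmidtLevel_iff] at hG ⊢
  by_cases h0 : μ = 0
  · rw [if_pos h0] at hG ⊢
    exact wclass_iso e hG
  · rw [if_neg h0] at hG ⊢
    obtain ⟨S, hSfin, hS⟩ := hG
    refine ⟨e '' S, hSfin.image _, ?_⟩
    intro C'
    have hcompl : ∀ v : V, v ∈ Sᶜ ↔ e v ∈ (e '' S)ᶜ := by
      intro v
      simp only [Set.mem_compl_iff, Set.mem_image, not_exists, not_and]
      constructor
      · intro hv x hx hex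
        exact hv (by rwa [← e.toEquiv.injective hex])
      · intro hv hvS
        exact hv v hvS rfl
    have Φ : G.induce Sᶜ ≃g H.induce (e '' S)ᶜ := isoOfSets e hcompl
    set C : (G.induce Sᶜ).ConnectedComponent := C'.map (Φ.symm.toHom) with hC
    obtain ⟨lam, hlam, hlev⟩ := hS C
    refine ⟨lam, hlam, ?_⟩
    have hsupp : ∀ x : (Sᶜ : Set V), x ∈ C.supp ↔ Φ x ∈ C'.supp := by
      intro x
      rw [hC, mem_supp_map_symm_iff Φ C' x]
    exact IH lam hlam (isoOfSets Φ hsupp) hlev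

lemma inSchmidtClosure_iso {V W : Type u} {G : SimpleGraph V} {H : SimpleGraph W}
    (e : G ≃g H) (h : InSchmidtClosure Wclass G) : InSchmidtClosure Wclass H := by
  obtain ⟨μ, hμ⟩ := h
  exact ⟨μ, schmidtLevel_iso μ e hμ⟩

end SchmidtAux

namespace SchmidtAux

open SimpleGraph Set

variable {V : Type*} {G : SimpleGraph V}

/-- `W` is almost closed under adjacency, with leaks in `F`. -/
def AlmostClosed (G : SimpleGraph V) (W F : Set V) : Prop :=
  ∀ v ∈ W, ∀ u, G.Adj v u → u ∈ W ∨ u ∈ F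

/-- any two vertices of `W` are joined by a walk inside `W`. -/
def SetConn (G : SimpleGraph V) (W : Set V) : Prop :=
  ∀ x ∈ W, ∀ y ∈ W, ∃ p : G.Walk x y, ∀ v ∈ p.support, v ∈ W

/-- Transfer of Vstar from an induced subgraph on an almost closed set to `G`. -/
lemma vstar_of_induce {W F : Set V} (hF : F.Finite) (hAC : AlmostClosed G W F)
    (x : W) (hx : x ∈ Vstar (G.induce W)) : (x : V) ∈ Vstar G := by
  obtain ⟨h1, h2⟩ := hx
  have himg : Subtype.val '' ((G.induce W).neighborSet x) ⊆ G.neighborSet (x : V) := by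
    rintro v ⟨u, hu, rfl⟩
    exact hu
  have h1' : (G.neighborSet (x : V)).Infinite :=
    Set.Infinite.mono himg (h1.image Subtype.val_injective.injOn)
  refine ⟨h1', ?_⟩
  -- neighbours of x of infinite degree in G are in W ∪ F; those in W have infinite degree in
  -- the induced graph too
  have key : G.neighborSet (x : V) ∩ Vinf G ⊆
      (Subtype.val '' ((G.induce W).neighborSet x ∩ Vinf (G.induce W))) ∪ F := by
    rintro u ⟨hu1, hu2⟩
    rcases hAC x x.2 u hu1 with hW | hFmem
    · left
      refine ⟨⟨u, hW⟩, ⟨hu1, ?_⟩, rfl⟩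
      -- u has infinite degree in G; all its neighbours are in W ∪ F, so infinitely many in W
      have hnbr : G.neighborSet u ⊆ (Subtype.val '' ((G.induce W).neighborSet ⟨u, hW⟩)) ∪ F := by
        intro z hz
        rcases hAC u hW z hz with hzW | hzF
        · exact Or.inl ⟨⟨z, hzW⟩, hz, rfl⟩
        · exact Or.inr hzF
      have : (Subtype.val '' ((G.induce W).neighborSet ⟨u, hW⟩)).Infinite := by
        by_contra hfin
        rw [Set.not_infinite] at hfin
        exact hu2 (Set.Finite.subset (hfin.union hF) hnbr)
      exact this.of_image _
    · exact Or.inr hFmem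
  exact Set.Finite.subset (Set.Finite.union (h2.image Subtype.val) hF) key

/-- Transfer of Vstar from `G` to an induced subgraph on an almost closed set. -/
lemma vstar_to_induce {W F : Set V} (hF : F.Finite) (hAC : AlmostClosed G W F)
    (x : W) (hx : (x : V) ∈ Vstar G) : x ∈ Vstar (G.induce W) := by
  obtain ⟨h1, h2⟩ := hx
  have hsub : G.neighborSet (x : V) ⊆ (Subtype.val '' ((G.induce W).neighborSet x)) ∪ F := by
    intro u hu
    rcases hAC x x.2 u hu with hW | hFm
    · exact Or.inl ⟨⟨u, hW⟩, hu, rfl⟩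
    · exact Or.inr hFm
  have hinf : ((G.induce W).neighborSet x).Infinite := by
    by_contra hfin
    rw [Set.not_infinite] at hfin
    exact h1 (Set.Finite.subset ((hfin.image _).union hF) hsub)
  refine ⟨hinf, ?_⟩
  have key : Subtype.val '' ((G.induce W).neighborSet x ∩ Vinf (G.induce W)) ⊆
      G.neighborSet (x : V) ∩ Vinf G := by
    rintro u ⟨⟨z, hzW⟩, ⟨hz1, hz2⟩, rfl⟩
    refine ⟨hz1, ?_⟩
    have : Subtype.val '' ((G.induce W).neighborSet ⟨z, hzW⟩) ⊆ G.neighborSet z := by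
      rintro v ⟨w, hw, rfl⟩; exact hw
    exact Set.Infinite.mono this (hz2.image Subtype.val_injective.injOn)
  have := Set.Finite.subset h2 key
  exact this.of_finite_image Subtype.val_injective.injOn

end SchmidtAux

namespace SchmidtAux

open SimpleGraph Set

lemma mem_supp_map_iff {V W : Type*} {G : SimpleGraph V} {H : SimpleGraph W}
    (e : G ≃g H) (C : G.ConnectedComponent) (v : V) :
    v ∈ C.supp ↔ e v ∈ (C.map (e.toHom : G →g H)).supp := by
  induction C using SimpleGraph.ConnectedComponent.ind with
  | _ w =>
  simp only [SimpleGraph.ConnectedComponent.map_mk, SimpleGraph.ConnectedComponent.mem_supp_iff,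
    SimpleGraph.ConnectedComponent.eq]
  constructor
  · intro h; simpa using h.map e.toHom
  · intro h; simpa using h.map e.symm.toHom

lemma reachable_of_mem_support {V : Type*} {G : SimpleGraph V} {a b v : V}
    (w : G.Walk a b) (hv : v ∈ w.support) : G.Reachable a v := by
  classical
  exact ⟨w.takeUntil v hv⟩

/-- If all fragments of `G.induce W` after removing a finite set `T` are in the Schmidt closure,
then so is `G.induce W`. -/
lemma closure_of_components {V : Type u} (G : SimpleGraph V) (W T : Set V) (hT : T.Finite)
    (h : ∀ D : (G.induce (W \ T)).ConnectedComponent,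
      InSchmidtClosure Wclass.{u} (G.induce (Subtype.val '' D.supp))) :
    InSchmidtClosure Wclass.{u} (G.induce W) := by
  classical
  set S : Set (W : Set V) := {w | (w : V) ∈ T} with hS
  have hSfin : S.Finite := hT.preimage Subtype.val_injective.injOn
  have hset : Subtype.val '' (Sᶜ : Set (W : Set V)) = W \ T := by
    ext v
    constructor
    · rintro ⟨⟨u, hu⟩, hc, rfl⟩
      exact ⟨hu, hc⟩
    · rintro ⟨hv, hvt⟩
      exact ⟨⟨v, hv⟩, hvt, rfl⟩
  have Φ0 : (G.induce W).induce Sᶜ ≃g G.induce (Subtype.val '' (Sᶜ : Set (W : Set V))) :=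
    induceInduce _ _
  rw [hset] at Φ0
  -- for each component C, an iso from its component graph to a flattened induced subgraph
  have key : ∀ C : ((G.induce W).induce Sᶜ).ConnectedComponent,
      InSchmidtClosure Wclass.{u} (CompGraph (G.induce W) S C) := by
    intro C
    set D := C.map (Φ0.toHom) with hD
    have hsupp : ∀ x : ((Sᶜ : Set (W : Set V)) : Set (W : Set V)),
        x ∈ C.supp ↔ Φ0 x ∈ D.supp := fun x => mem_supp_map_iff Φ0 C x
    have e1 : CompGraph (G.induce W) S C ≃g (G.induce (W \ T)).induce D.supp :=
      isoOfSets Φ0 hsupp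
    have e2 : (G.induce (W \ T)).induce D.supp ≃g
        G.induce (Subtype.val '' D.supp) := induceInduce _ _
    exact inSchmidtClosure_iso (e1.trans e2).symm (h D)
  -- now take the supremum of the ranks
  set f : ((G.induce W).induce Sᶜ).ConnectedComponent → Ordinal.{u} :=
    fun C => SchmidtRank Wclass (CompGraph (G.induce W) S C) with hf
  have hfmem : ∀ C, SchmidtLevel Wclass (f C) _ (CompGraph (G.induce W) S C) := by
    intro C
    have hne : {μ : Ordinal.{u} | SchmidtLevel Wclass μ _ (CompGraph (G.induce W) S C)}.Nonempty :=
      key C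
    exact csInf_mem hne
  refine ⟨(⨆ C, f C) + 1, ?_⟩
  rw [SchmidtLevel_iff, if_neg (by
    rw [Ordinal.add_one_eq_succ]
    exact (Order.succ_ne_bot _ : Order.succ (⨆ C, f C) ≠ (0 : Ordinal.{u})))]
  refine ⟨S, hSfin, fun C => ⟨f C, ?_, hfmem C⟩⟩
  rw [Ordinal.add_one_eq_succ, Order.lt_succ_iff]
  exact le_ciSup (Ordinal.bddAbove_range _) C

end SchmidtAux

namespace SchmidtAux

open SimpleGraph Set

/-- If `G.induce W` is not in the closure, then after deleting any finite set `T` there is a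
"bad" fragment `U` retaining all the structural properties. -/
lemma exists_bad_fragment {V : Type u} (G : SimpleGraph V) {W F T : Set V}
    (hBad : ¬ InSchmidtClosure Wclass.{u} (G.induce W)) (hAC : AlmostClosed G W F)
    (hT : T.Finite) :
    ∃ U : Set V, U ⊆ W \ T ∧ U.Nonempty ∧ ¬ InSchmidtClosure Wclass.{u} (G.induce U) ∧
      SetConn G U ∧ AlmostClosed G U (F ∪ T) ∧
      (∀ v ∈ U, ∀ u, G.Adj v u → u ∈ W \ T → u ∈ U) := by
  by_contra hno
  push_neg at hno
  apply hBad
  apply closure_of_components G W T hT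
  intro D
  set U : Set V := Subtype.val '' D.supp with hU
  have hUsub : U ⊆ W \ T := by
    rintro v ⟨⟨u, hu⟩, _, rfl⟩
    exact hu
  have hUne : U.Nonempty := by
    obtain ⟨v, hv⟩ := D.exists_rep
    exact ⟨v.1, v, hv, rfl⟩
  have hUconn : SetConn G U := by
    rintro x ⟨x', hx', rfl⟩ y ⟨y', hy', rfl⟩
    rw [SimpleGraph.ConnectedComponent.mem_supp_iff] at hx' hy'
    have hreach : (G.induce (W \ T)).Reachable x' y' := by
      rw [← SimpleGraph.ConnectedComponent.eq, hx', hy']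
    obtain ⟨w⟩ := hreach
    refine ⟨w.map (induceValHom (W \ T)), ?_⟩
    intro v hv
    have hv : v ∈ (w.map (induceValHom (W \ T))).support := hv
    rw [SimpleGraph.Walk.support_map, List.mem_map] at hv
    obtain ⟨u, hu, rfl⟩ := hv
    refine ⟨u, ?_, rfl⟩
    rw [SimpleGraph.ConnectedComponent.mem_supp_iff, ← hx',
      SimpleGraph.ConnectedComponent.eq]
    exact (reachable_of_mem_support w hu).symm
  have hUclosed : ∀ v ∈ U, ∀ u, G.Adj v u → u ∈ W \ T → u ∈ U := by
    rintro v ⟨v', hv', rfl⟩ u hadj hu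
    refine ⟨⟨u, hu⟩, ?_, rfl⟩
    rw [SimpleGraph.ConnectedComponent.mem_supp_iff, ← hv',
      SimpleGraph.ConnectedComponent.eq]
    exact SimpleGraph.Adj.reachable (by exact hadj.symm : (G.induce (W \ T)).Adj ⟨u, hu⟩ v')
  have hUAC : AlmostClosed G U (F ∪ T) := by
    intro v hv u hadj
    have hvW : v ∈ W := (hUsub hv).1
    rcases hAC v hvW u hadj with hW | hFm
    · by_cases huT : u ∈ T
      · exact Or.inr (Or.inr huT)
      · exact Or.inl (hUclosed v hv u hadj ⟨hW, huT⟩)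
    · exact Or.inr (Or.inl hFm)
  by_contra hbadU
  obtain ⟨v, hvU, u, hadj, huWT, huU⟩ := hno U hUsub hUne hbadU hUconn hUAC
  exact huU (hUclosed v hvU u hadj huWT)

end SchmidtAux

namespace SchmidtAux

open SimpleGraph Set

/-- Direction 1: a graph in some Schmidt level has no comb with teeth in `Vstar`. -/
lemma no_comb_of_schmidtLevel : ∀ (μ : Ordinal.{u}), ∀ (V : Type u) (G : SimpleGraph V),
    SchmidtLevel Wclass.{u} μ V G → ¬ HasCombWithTeethIn G (Vstar G) := by
  intro μ
  induction μ using Ordinal.induction with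
  | h μ IH =>
  intro V G hlev hcomb
  obtain ⟨r, k, t, p, hrinj, hadj, hkmono, htA, hpath, hdisj, hmeet⟩ := hcomb
  have htinj : Function.Injective t := by
    intro m n hmn
    by_contra hne
    apply hdisj m n hne (t m) ((p m).end_mem_support)
    rw [hmn]
    exact (p n).end_mem_support
  rw [SchmidtLevel_iff] at hlev
  by_cases h0 : μ = 0
  · rw [if_pos h0] at hlev
    exact (Set.infinite_of_injective_forall_mem htinj htA) hlev.2
  rw [if_neg h0] at hlev
  obtain ⟨S, hSfin, hcomp⟩ := hlev
  -- a bound beyond which the ray avoids S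
  have hI1 : (r ⁻¹' S).Finite := hSfin.preimage hrinj.injOn
  obtain ⟨N0, hN0⟩ := hI1.bddAbove
  set N := N0 + 1 with hN
  have hrS : ∀ i, N ≤ i → r i ∉ S := by
    intro i hi hmem
    have := hN0 hmem
    omega
  -- a bound beyond which the paths avoid S
  set I2 : Set ℕ := {n | ∃ v ∈ S, v ∈ (p n).support} with hI2def
  have hch : ∀ n ∈ I2, ∃ v, v ∈ S ∧ v ∈ (p n).support := fun n hn => by
    obtain ⟨v, hv1, hv2⟩ := hn; exact ⟨v, hv1, hv2⟩
  choose f hf1 hf2 using hch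
  classical
  set f' : ℕ → V := fun n => if h : n ∈ I2 then f n h else r 0 with hf'
  have hf'1 : ∀ n (h : n ∈ I2), f' n ∈ S := fun n h => by rw [hf']; simp only [dif_pos h]; exact hf1 n h
  have hf'2 : ∀ n (h : n ∈ I2), f' n ∈ (p n).support := fun n h => by
    rw [hf']; simp only [dif_pos h]; exact hf2 n h
  have hI2 : I2.Finite := by
    refine Set.Finite.of_finite_image (f := f') (hSfin.subset ?_) ?_
    · rintro v ⟨n, hn, rfl⟩; exact hf'1 n hn
    · intro a ha b hb hab
      by_contra hne
      apply hdisj a b hne (f' a) (hf'2 a ha)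
      rw [hab]
      exact hf'2 b hb
  obtain ⟨M0, hM0⟩ := hI2.bddAbove
  set M := max (M0 + 1) N with hM
  have hMN : N ≤ M := le_max_right _ _
  have hpS : ∀ n, M ≤ n → ∀ v ∈ (p n).support, v ∉ S := by
    intro n hn v hv hvS
    have : n ∈ I2 := ⟨v, hvS, hv⟩
    have := hM0 this
    omega
  have hkN : ∀ n, M ≤ n → N ≤ k n := fun n hn =>
    le_trans (le_trans hMN hn) hkmono.le_apply
  -- the tail of the ray lies in Sᶜ
  have hrSc : ∀ i, r (N + i) ∈ (Sᶜ : Set V) := fun i => hrS _ (Nat.le_add_right _ _)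
  -- the component containing the tail
  set c : (G.induce Sᶜ).ConnectedComponent :=
    (G.induce Sᶜ).connectedComponentMk ⟨r N, hrSc 0⟩ with hc
  have hrc : ∀ i, (⟨r (N + i), hrSc i⟩ : (Sᶜ : Set V)) ∈ c.supp := by
    intro i
    induction i with
    | zero => rfl
    | succ i ih =>
      rw [SimpleGraph.ConnectedComponent.mem_supp_iff] at ih ⊢
      rw [← ih]
      apply SimpleGraph.ConnectedComponent.connectedComponentMk_eq_of_adj
      have : G.Adj (r (N + i + 1)) (r (N + i)) := (hadj (N + i)).symm
      exact this
  -- vertices on the comb paths lie in `c` as well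
  have hpc : ∀ n (hn : M ≤ n), ∀ v (hv : v ∈ (p n).support),
      (⟨v, hpS n hn v hv⟩ : (Sᶜ : Set V)) ∈ c.supp := by
    intro n hn v hv
    have hsupp : ∀ w ∈ (p n).support, w ∈ (Sᶜ : Set V) := fun w hw => hpS n hn w hw
    have hvmem : (⟨v, hpS n hn v hv⟩ : (Sᶜ : Set V)) ∈ (liftWalk (p n) hsupp).support :=
      (mem_liftWalk_support (p n) hsupp _).mpr hv
    have hstart : ((⟨r (k n), hpS n hn _ (p n).start_mem_support⟩ : (Sᶜ : Set V)) ∈ c.supp) := by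
      have : k n = N + (k n - N) := by
        have := hkN n hn; omega
      rw [SimpleGraph.ConnectedComponent.mem_supp_iff]
      have h2 := hrc (k n - N)
      rw [SimpleGraph.ConnectedComponent.mem_supp_iff] at h2
      rw [← h2]
      congr 1
      exact Subtype.ext (congrArg r this)
    rw [SimpleGraph.ConnectedComponent.mem_supp_iff] at hstart ⊢
    rw [← hstart, SimpleGraph.ConnectedComponent.eq]
    exact (reachable_of_mem_support (liftWalk (p n) hsupp) hvmem).symm
  -- now build the comb inside the component graph `CompGraph G S c`
  obtain ⟨lam, hlam, hlev'⟩ := hcomp c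
  apply IH lam hlam _ _ hlev'
  have hMn : ∀ n : ℕ, M ≤ M + n := fun n => Nat.le_add_right _ _
  have hkEq : ∀ n : ℕ, N + (k (M + n) - N) = k (M + n) := by
    intro n
    have := hkN (M + n) (hMn n)
    omega
  have htS : ∀ n : ℕ, t (M + n) ∉ S :=
    fun n => hpS (M + n) (hMn n) _ (p (M + n)).end_mem_support
  have htc : ∀ n : ℕ, (⟨t (M + n), htS n⟩ : (Sᶜ : Set V)) ∈ c.supp :=
    fun n => hpc (M + n) (hMn n) _ (p (M + n)).end_mem_support
  set R : ℕ → c.supp := fun i => ⟨⟨r (N + i), hrSc i⟩, hrc i⟩ with hR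
  set K : ℕ → ℕ := fun n => k (M + n) - N with hK
  have hsupp1 : ∀ n : ℕ, ∀ v ∈ (p (M + n)).support, v ∈ (Sᶜ : Set V) :=
    fun n v hv => hpS (M + n) (hMn n) v hv
  have hsupp2 : ∀ n : ℕ, ∀ x ∈ (liftWalk (p (M + n)) (hsupp1 n)).support, x ∈ c.supp := by
    intro n x hx
    rw [mem_liftWalk_support] at hx
    have := hpc (M + n) (hMn n) _ hx
    exact this
  set Teeth : ℕ → c.supp := fun n => ⟨⟨t (M + n), htS n⟩, htc n⟩ with hT
  set P : ∀ n : ℕ, (CompGraph G S c).Walk (R (K n)) (Teeth n) := fun n =>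
    (liftWalk (liftWalk (p (M + n)) (hsupp1 n)) (hsupp2 n)).copy
      (by apply Subtype.ext; apply Subtype.ext; exact (congrArg r (hkEq n)).symm)
      (by apply Subtype.ext; apply Subtype.ext; rfl) with hP
  have hPsupp : ∀ n : ℕ, ∀ x : c.supp, x ∈ (P n).support ↔
      ((x : (Sᶜ : Set V)) : V) ∈ (p (M + n)).support := by
    intro n x
    rw [hP]
    change x ∈ (SimpleGraph.Walk.copy (G := (G.induce Sᶜ).induce c.supp)
      (liftWalk (liftWalk (p (M + n)) (hsupp1 n)) (hsupp2 n)) _ _).support ↔ _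
    rw [SimpleGraph.Walk.support_copy, mem_liftWalk_support, mem_liftWalk_support]
  refine ⟨R, K, Teeth, P, ?_, ?_, ?_, ?_, ?_, ?_, ?_⟩
  · -- injectivity of the ray
    intro i j hij
    have : r (N + i) = r (N + j) := congrArg (fun x : c.supp => ((x : (Sᶜ : Set V)) : V)) hij
    have := hrinj this
    omega
  · -- adjacency
    intro n
    show (CompGraph G S c).Adj _ _
    have : G.Adj (r (N + n)) (r (N + n + 1)) := hadj (N + n)
    exact this
  · -- strict monotonicity of K
    intro a b hab
    have h1 := hkN (M + a) (hMn a)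
    have h2 := hkN (M + b) (hMn b)
    have h3 : k (M + a) < k (M + b) := hkmono (by omega)
    show k (M + a) - N < k (M + b) - N
    omega
  · -- teeth in Vstar
    intro n
    have hWc1 : AlmostClosed G (Sᶜ : Set V) S := by
      intro v _ u _
      by_cases h : u ∈ S
      · exact Or.inr h
      · exact Or.inl h
    have h1 : (⟨t (M + n), htS n⟩ : (Sᶜ : Set V)) ∈ Vstar (G.induce Sᶜ) :=
      vstar_to_induce hSfin hWc1 _ (htA (M + n))
    have hWc2 : AlmostClosed (G.induce Sᶜ) c.supp ∅ := by
      intro v hv u hadj'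
      left
      rw [SimpleGraph.ConnectedComponent.mem_supp_iff] at hv ⊢
      rw [← hv]
      exact (SimpleGraph.ConnectedComponent.connectedComponentMk_eq_of_adj hadj'.symm)
    exact vstar_to_induce Set.finite_empty hWc2 ⟨⟨t (M + n), htS n⟩, htc n⟩ h1
  · -- paths
    intro n
    rw [hP]
    change (SimpleGraph.Walk.copy (G := (G.induce Sᶜ).induce c.supp)
      (liftWalk (liftWalk (p (M + n)) (hsupp1 n)) (hsupp2 n)) _ _).IsPath
    rw [SimpleGraph.Walk.isPath_copy]
    exact liftWalk_isPath _ _ (liftWalk_isPath _ _ (hpath (M + n)))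
  · -- disjointness
    intro m n hmn x hxm hxn
    rw [hPsupp] at hxm hxn
    exact hdisj (M + m) (M + n) (by omega) _ hxm hxn
  · -- meeting the ray only at the attachment vertex
    intro n x hx hex
    rw [hPsupp] at hx
    obtain ⟨i, hi⟩ := hex
    have hxr : ((x : (Sᶜ : Set V)) : V) = r (N + i) := by
      rw [hi]
    have := hmeet (M + n) _ hx ⟨N + i, hxr⟩
    apply Subtype.ext; apply Subtype.ext
    rw [this]
    exact congrArg r (hkEq n).symm

end SchmidtAux

namespace SchmidtAux

open SimpleGraph Set

variable {V : Type u} {G : SimpleGraph V}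

lemma list_finite_toSet (l : List V) : {v : V | v ∈ l}.Finite := by
  classical
  exact l.toFinset.finite_toSet.subset (by intro v hv; simpa using hv)

lemma isPath_append {a b c : V} {P : G.Walk a b} {Q : G.Walk b c}
    (hP : P.IsPath) (hQ : Q.IsPath) (hint : ∀ v ∈ P.support, v ∈ Q.support → v = b) :
    (P.append Q).IsPath := by
  rw [SimpleGraph.Walk.isPath_def, SimpleGraph.Walk.support_append]
  refine List.Nodup.append hP.support_nodup ?_ ?_
  · have := hQ.support_nodup
    rw [Q.support_eq_cons] at this
    exact this.of_cons
  · rw [List.disjoint_left]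
    intro v hv hvt
    have hvQ : v ∈ Q.support := by
      rw [Q.support_eq_cons]; exact List.mem_cons_of_mem _ hvt
    have hb : v = b := hint v hv hvQ
    have := hQ.support_nodup
    rw [Q.support_eq_cons] at this
    rw [hb] at hvt
    exact (List.nodup_cons.mp this).1 hvt

lemma getVert_injOn_of_isPath {a b : V} {P : G.Walk a b} (hP : P.IsPath) :
    ∀ i ≤ P.length, ∀ j ≤ P.length, P.getVert i = P.getVert j → i = j := by
  induction P with
  | nil => intro i hi j hj _; simp at hi hj; omega
  | cons hadj q ih =>
    rw [SimpleGraph.Walk.cons_isPath_iff] at hP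
    intro i hi j hj hij
    match i, j with
    | 0, 0 => rfl
    | 0, j + 1 =>
      exfalso
      rw [SimpleGraph.Walk.length_cons] at hj
      have : q.getVert j ∈ q.support :=
        SimpleGraph.Walk.mem_support_iff_exists_getVert.mpr ⟨j, rfl, by omega⟩
      rw [SimpleGraph.Walk.getVert_zero, SimpleGraph.Walk.getVert_cons_succ] at hij
      rw [← hij] at this
      exact hP.2 this
    | i + 1, 0 =>
      exfalso
      rw [SimpleGraph.Walk.length_cons] at hi
      have : q.getVert i ∈ q.support :=
        SimpleGraph.Walk.mem_support_iff_exists_getVert.mpr ⟨i, rfl, by omega⟩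
      rw [SimpleGraph.Walk.getVert_zero, SimpleGraph.Walk.getVert_cons_succ] at hij
      rw [hij] at this
      exact hP.2 this
    | i + 1, j + 1 =>
      rw [SimpleGraph.Walk.length_cons] at hi hj
      rw [SimpleGraph.Walk.getVert_cons_succ, SimpleGraph.Walk.getVert_cons_succ] at hij
      have := ih hP.1 i (by omega) j (by omega) hij
      omega

lemma vstar_infinite_of_bad [Countable V] {W F : Set V}
    (hF : F.Finite) (hAC : AlmostClosed G W F)
    (hBad : ¬ InSchmidtClosure Wclass.{u} (G.induce W)) :
    {v : V | v ∈ W ∧ v ∈ Vstar G}.Infinite := by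
  have h0 : ¬ SchmidtLevel Wclass.{u} 0 _ (G.induce W) := fun h => hBad ⟨0, h⟩
  rw [SchmidtLevel_iff, if_pos rfl] at h0
  have hvi : (Vstar (G.induce W)).Infinite := by
    by_contra h
    rw [Set.not_infinite] at h
    exact h0 ⟨inferInstance, h⟩
  have himg := hvi.image (f := fun x : W => (x : V)) Subtype.val_injective.injOn
  apply himg.mono
  rintro v ⟨x, hx, rfl⟩
  exact ⟨x.2, vstar_of_induce hF hAC x hx⟩

lemma attach_lemma {U Wset T : Set V}
    (hclosed : ∀ v ∈ U, ∀ u, G.Adj v u → u ∈ Wset \ T → u ∈ U)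
    (hUW : U ⊆ Wset \ T) :
    ∀ {a b : V} (ρ : G.Walk a b), a ∈ U → b ∈ T → (∀ v ∈ ρ.support, v ∈ Wset) →
    ∃ y z, y ∈ T ∧ z ∈ U ∧ G.Adj y z := by
  intro a b ρ
  induction ρ with
  | nil => intro ha hb _; exact absurd hb (hUW ha).2
  | @cons u w x hadj ρ' ih =>
    intro ha hb hsupp
    by_cases hwT : w ∈ T
    · exact ⟨w, u, hwT, ha, hadj.symm⟩
    · have hwW : w ∈ Wset := hsupp w (by simp)
      have hwU : w ∈ U := hclosed u ha w hadj ⟨hwW, hwT⟩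
      exact ih hwU hb (fun v hv => hsupp v (by simp [hv]))

end SchmidtAux

namespace SchmidtAux

open SimpleGraph Set

variable {V : Type u}

/-- The state of the recursive construction of a comb in a graph outside the closure. -/
structure Stage (G : SimpleGraph V) (v0 : V) : Type u where
  W : Set V
  Fl : Set V
  x : V
  P : G.Walk v0 x
  hx : x ∈ W
  hP : P.IsPath
  hI2 : ∀ v ∈ P.support, v ∈ W → v = x
  hBad : ¬ InSchmidtClosure Wclass.{u} (G.induce W)
  hConn : SetConn G W
  hFfin : Fl.Finite
  hAC : AlmostClosed G W Fl

/-- The data produced by one step of the construction. -/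
structure StepData (G : SimpleGraph V) (v0 : V) (s : Stage G v0) : Type u where
  next : Stage G v0
  y : V
  t : V
  τ : G.Walk y t
  q : G.Walk s.x next.x
  hq : next.P = s.P.append q
  hqW : ∀ v ∈ q.support, v ∈ s.W
  hWsub : next.W ⊆ s.W
  ht : t ∈ Vstar G
  hτpath : τ.IsPath
  hτW : ∀ v ∈ τ.support, v ∈ s.W
  hτU : ∀ v ∈ τ.support, v ∉ next.W
  hτP : ∀ v ∈ τ.support, v ∈ next.P.support → v = y
  hlen : s.P.length < next.P.length
  hy : next.P.getVert (next.P.length - 1) = y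

variable {G : SimpleGraph V} [Countable V] {v0 : V}

lemma step_aux (s : Stage G v0) : Nonempty (StepData G v0 s) := by
  classical
  -- choose the tooth
  have hA : {v : V | v ∈ s.W ∧ v ∈ Vstar G}.Infinite :=
    vstar_infinite_of_bad s.hFfin s.hAC s.hBad
  obtain ⟨t, ⟨htW, htV⟩, htx⟩ := (hA.diff (Set.finite_singleton s.x)).nonempty
  rw [Set.mem_singleton_iff] at htx
  -- a path from the end of the spine to the tooth, inside W
  obtain ⟨τ', hτ'W⟩ := s.hConn s.x s.hx t htW
  set τ : G.Walk s.x t := τ'.bypass with hτdef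
  have hτpath : τ.IsPath := τ'.bypass_isPath
  have hτW : ∀ v ∈ τ.support, v ∈ s.W := fun v hv =>
    hτ'W v (τ'.support_bypass_subset hv)
  set T : Set V := {v | v ∈ τ.support} with hTdef
  have hTfin : T.Finite := list_finite_toSet _
  have hxT : s.x ∈ T := τ.start_mem_support
  -- the bad fragment
  obtain ⟨U, hUsub, hUne, hUbad, hUconn, hUAC, hUclosed⟩ :=
    exists_bad_fragment G s.hBad s.hAC hTfin
  obtain ⟨u0, hu0⟩ := hUne
  -- find an attachment edge from the support of τ into U
  obtain ⟨ρ, hρW⟩ := s.hConn u0 (hUsub hu0).1 s.x s.hx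
  obtain ⟨y, z, hyT, hzU, hyz⟩ := attach_lemma hUclosed hUsub ρ hu0 hxT hρW
  have hyτ : y ∈ τ.support := hyT
  -- split τ at y
  set τ₁ : G.Walk s.x y := τ.takeUntil y hyτ with hτ₁
  set τ₂ : G.Walk y t := τ.dropUntil y hyτ with hτ₂
  have hspec : τ₁.append τ₂ = τ := τ.take_spec hyτ
  have hτ₁path : τ₁.IsPath := hτpath.takeUntil hyτ
  have hτ₂path : τ₂.IsPath := hτpath.dropUntil hyτ
  have hτ₁sub : ∀ v ∈ τ₁.support, v ∈ T := fun v hv => τ.support_takeUntil_subset hyτ hv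
  have hτ₂sub : ∀ v ∈ τ₂.support, v ∈ T := fun v hv => τ.support_dropUntil_subset hyτ hv
  -- nodup decomposition of the support of τ
  have hnodup : (τ₁.support ++ τ₂.support.tail).Nodup := by
    have := hτpath.support_nodup
    rw [← hspec, SimpleGraph.Walk.support_append] at this
    exact this
  have hdisj12 : ∀ v ∈ τ₁.support, v ∈ τ₂.support.tail → False := by
    intro v hv1 hv2
    exact (List.disjoint_left.mp (List.disjoint_of_nodup_append hnodup)) hv1 hv2
  have hsplit : ∀ v ∈ τ₁.support, v ∈ τ₂.support → v = y := by
    intro v hv1 hv2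
    rw [τ₂.support_eq_cons] at hv2
    rcases List.mem_cons.mp hv2 with h | h
    · exact h
    · exact absurd h (fun h => hdisj12 v hv1 h)
  have hzT : z ∉ T := (hUsub hzU).2
  have hzx : z ≠ s.x := fun h => hzT (h ▸ hxT)
  have hPWx : ∀ v ∈ s.P.support, v ∈ s.W → v = s.x := s.hI2
  -- the new spine
  have hPτ₁ : (s.P.append τ₁).IsPath := by
    apply isPath_append s.hP hτ₁path
    intro v hv1 hv2
    exact hPWx v hv1 (hτW v (τ.support_takeUntil_subset hyτ hv2))
  have hedge : (SimpleGraph.Walk.cons hyz SimpleGraph.Walk.nil).IsPath := by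
    rw [SimpleGraph.Walk.cons_isPath_iff]
    refine ⟨SimpleGraph.Walk.IsPath.nil, ?_⟩
    simp only [SimpleGraph.Walk.support_nil, List.mem_singleton]
    intro h
    exact hzT (h ▸ hyT)
  have hPnext : ((s.P.append τ₁).append (SimpleGraph.Walk.cons hyz SimpleGraph.Walk.nil)).IsPath := by
    apply isPath_append hPτ₁ hedge
    intro v hv1 hv2
    simp only [SimpleGraph.Walk.support_cons, SimpleGraph.Walk.support_nil,
      List.mem_cons, List.mem_singleton, List.not_mem_nil, or_false] at hv2
    rcases hv2 with h | h
    · exact h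
    · exfalso
      rw [h] at hv1
      rw [SimpleGraph.Walk.mem_support_append_iff] at hv1
      rcases hv1 with h1 | h1
      · exact hzx (hPWx z h1 (hUsub hzU).1)
      · exact hzT (hτ₁sub z h1)
  refine ⟨?_⟩
  refine
  { next :=
    { W := U
      Fl := s.Fl ∪ T
      x := z
      P := (s.P.append τ₁).append (SimpleGraph.Walk.cons hyz SimpleGraph.Walk.nil)
      hx := hzU
      hP := hPnext
      hI2 := ?_
      hBad := hUbad
      hConn := hUconn
      hFfin := s.hFfin.union hTfin
      hAC := hUAC }
    y := y
    t := t
    τ := τ₂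
    q := τ₁.append (SimpleGraph.Walk.cons hyz SimpleGraph.Walk.nil)
    hq := (SimpleGraph.Walk.append_assoc _ _ _).symm
    hqW := ?_
    hWsub := fun v hv => (hUsub hv).1
    ht := htV
    hτpath := hτ₂path
    hτW := fun v hv => hτW v (τ.support_dropUntil_subset hyτ hv)
    hτU := fun v hv hvU => (hUsub hvU).2 (hτ₂sub v hv)
    hτP := ?_
    hlen := ?_
    hy := ?_ }
  · -- hI2 for the next stage
    intro v hv hvU
    rw [SimpleGraph.Walk.mem_support_append_iff] at hv
    rcases hv with h | h
    · exfalso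
      rw [SimpleGraph.Walk.mem_support_append_iff] at h
      rcases h with h1 | h1
      · have : v = s.x := hPWx v h1 (hUsub hvU).1
        exact (hUsub hvU).2 (this ▸ hxT)
      · exact (hUsub hvU).2 (hτ₁sub v h1)
    · simp only [SimpleGraph.Walk.support_cons, SimpleGraph.Walk.support_nil,
        List.mem_cons, List.mem_singleton, List.not_mem_nil, or_false] at h
      rcases h with h | h
      · exfalso
        exact (hUsub hvU).2 (h ▸ hyT)
      · exact h
  · -- hqW
    intro v hv
    rw [SimpleGraph.Walk.mem_support_append_iff] at hv
    rcases hv with h | h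
    · exact hτW v (τ.support_takeUntil_subset hyτ h)
    · simp only [SimpleGraph.Walk.support_cons, SimpleGraph.Walk.support_nil,
        List.mem_cons, List.mem_singleton, List.not_mem_nil, or_false] at h
      rcases h with h | h
      · exact h ▸ hτW y hyτ
      · exact h ▸ (hUsub hzU).1
  · -- hτP : τ₂ meets the new spine only at y
    intro v hv hvP
    rw [SimpleGraph.Walk.mem_support_append_iff] at hvP
    rcases hvP with h | h
    · rw [SimpleGraph.Walk.mem_support_append_iff] at h
      rcases h with h1 | h1
      · -- v on the old spine and in W, hence v = s.x; but s.x is the head of τ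
        have hvx : v = s.x := hPWx v h1 (hτW v (hτ₂sub v hv))
        subst hvx
        exact (hsplit s.x τ₁.start_mem_support hv)
      · exact hsplit v h1 hv
    · simp only [SimpleGraph.Walk.support_cons, SimpleGraph.Walk.support_nil,
        List.mem_cons, List.mem_singleton, List.not_mem_nil, or_false] at h
      rcases h with h | h
      · exact h
      · exact absurd (hτ₂sub v hv) (h ▸ hzT)
  · -- hlen
    rw [SimpleGraph.Walk.length_append, SimpleGraph.Walk.length_append]
    simp only [SimpleGraph.Walk.length_cons, SimpleGraph.Walk.length_nil]
    omega
  · -- hy : the second-to-last vertex of the new spine is y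
    rw [SimpleGraph.Walk.length_append, SimpleGraph.Walk.getVert_append]
    simp only [SimpleGraph.Walk.length_cons, SimpleGraph.Walk.length_nil]
    have hnlt : ¬ ((s.P.append τ₁).length + (0 + 1) - 1 < (s.P.append τ₁).length) := by omega
    refine (if_neg hnlt).trans ?_
    convert SimpleGraph.Walk.getVert_zero (SimpleGraph.Walk.cons hyz SimpleGraph.Walk.nil) using 2
    omega

noncomputable def step (s : Stage G v0) : StepData G v0 s := Classical.choice (step_aux s)

/-- The infinite chain of stages. -/
noncomputable def chain (s0 : Stage G v0) : ℕ → Stage G v0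
  | 0 => s0
  | n + 1 => (step (chain s0 n)).next

end SchmidtAux

namespace SchmidtAux

open SimpleGraph Set

variable {V : Type u} {G : SimpleGraph V} [Countable V] {v0 : V}

section Assembly

variable (s0 : Stage G v0)

lemma chain_len_lt (n : ℕ) : (chain s0 n).P.length < (chain s0 (n + 1)).P.length :=
  (step (chain s0 n)).hlen

lemma chain_len_le : ∀ m n : ℕ, m ≤ n → (chain s0 m).P.length ≤ (chain s0 n).P.length := by
  intro m n h
  induction n, h using Nat.le_induction with
  | base => exact le_refl _
  | succ n hmn ih => exact le_trans ih (le_of_lt (chain_len_lt s0 n))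

lemma chain_len_ge (n : ℕ) : n ≤ (chain s0 n).P.length := by
  induction n with
  | zero => exact Nat.zero_le _
  | succ n ih => exact Nat.lt_of_le_of_lt ih (chain_len_lt s0 n)

lemma chain_W_mono : ∀ m n : ℕ, m ≤ n → (chain s0 n).W ⊆ (chain s0 m).W := by
  intro m n h
  induction n, h using Nat.le_induction with
  | base => exact subset_rfl
  | succ n hmn ih => exact subset_trans (step (chain s0 n)).hWsub ih

lemma chain_getVert_succ (n i : ℕ) (hi : i ≤ (chain s0 n).P.length) :
    (chain s0 (n + 1)).P.getVert i = (chain s0 n).P.getVert i := by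
  have hq := (step (chain s0 n)).hq
  show ((step (chain s0 n)).next).P.getVert i = _
  rw [hq, SimpleGraph.Walk.getVert_append]
  by_cases h : i < (chain s0 n).P.length
  · rw [if_pos h]
  · rw [if_neg h]
    have : i = (chain s0 n).P.length := by omega
    subst this
    rw [Nat.sub_self, SimpleGraph.Walk.getVert_zero, SimpleGraph.Walk.getVert_length]

lemma chain_getVert_stable : ∀ m n : ℕ, m ≤ n → ∀ i ≤ (chain s0 m).P.length,
    (chain s0 n).P.getVert i = (chain s0 m).P.getVert i := by
  intro m n h
  induction n, h using Nat.le_induction with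
  | base => intro i _; rfl
  | succ n hmn ih =>
    intro i hi
    rw [chain_getVert_succ s0 n i (le_trans hi (chain_len_le s0 m n hmn)), ih i hi]

/-- The ray. -/
noncomputable def ray (i : ℕ) : V := (chain s0 (i + 1)).P.getVert i

lemma ray_eq (i n : ℕ) (h : i + 1 ≤ n) : ray s0 i = (chain s0 n).P.getVert i :=
  (chain_getVert_stable s0 (i + 1) n h i (le_trans (Nat.le_succ i) (chain_len_ge s0 (i + 1)))).symm

lemma ray_adj (i : ℕ) : G.Adj (ray s0 i) (ray s0 (i + 1)) := by
  rw [ray_eq s0 i (i + 2) (by omega)]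
  show G.Adj _ ((chain s0 (i + 2)).P.getVert (i + 1))
  exact SimpleGraph.Walk.adj_getVert_succ _ (Nat.lt_of_lt_of_le (by omega) (chain_len_ge s0 (i + 2)))

lemma ray_inj : Function.Injective (ray s0) := by
  have key : ∀ i j : ℕ, i < j → ray s0 i ≠ ray s0 j := by
    intro i j hij heq
    rw [ray_eq s0 i (j + 1) (by omega)] at heq
    have hj : j ≤ (chain s0 (j + 1)).P.length := le_trans (Nat.le_succ j) (chain_len_ge s0 (j + 1))
    have := getVert_injOn_of_isPath (chain s0 (j + 1)).hP i (by omega) j hj heq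
    omega
  intro i j h
  rcases lt_trichotomy i j with hlt | heq | hgt
  · exact absurd h (key i j hlt)
  · exact heq
  · exact absurd h.symm (key j i hgt)

/-- The attachment indices. -/
noncomputable def kk (n : ℕ) : ℕ := (chain s0 (n + 1)).P.length - 1

lemma kk_mono : StrictMono (kk s0) := by
  apply strictMono_nat_of_lt_succ
  intro n
  have h1 := chain_len_lt s0 (n + 1)
  have h2 := chain_len_ge s0 (n + 1)
  show (chain s0 (n + 1)).P.length - 1 < (chain s0 (n + 1 + 1)).P.length - 1
  omega

lemma ray_kk (n : ℕ) : ray s0 (kk s0 n) = (step (chain s0 n)).y := by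
  have hk1 : n + 1 ≤ kk s0 n + 1 := by
    have := chain_len_ge s0 (n + 1)
    show n + 1 ≤ (chain s0 (n + 1)).P.length - 1 + 1
    omega
  rw [ray_eq s0 (kk s0 n) (kk s0 n + 1) (le_refl _),
    chain_getVert_stable s0 (n + 1) (kk s0 n + 1) hk1 (kk s0 n)
      (by show (chain s0 (n+1)).P.length - 1 ≤ _; omega)]
  exact (step (chain s0 n)).hy

lemma tooth_disjoint : ∀ m n : ℕ, m < n →
    ∀ v ∈ (step (chain s0 m)).τ.support, v ∉ (step (chain s0 n)).τ.support := by
  intro m n hmn v hvm hvn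
  have h1 : v ∈ (chain s0 n).W := (step (chain s0 n)).hτW v hvn
  have h2 : v ∈ (chain s0 (m + 1)).W := chain_W_mono s0 (m + 1) n hmn h1
  exact (step (chain s0 m)).hτU v hvm h2

lemma tooth_meets_spine : ∀ n m : ℕ, n + 1 ≤ m → ∀ v ∈ (step (chain s0 n)).τ.support,
    v ∈ (chain s0 m).P.support → v = (step (chain s0 n)).y := by
  intro n m h
  induction m, h using Nat.le_induction with
  | base => exact fun v hv hvP => (step (chain s0 n)).hτP v hv hvP
  | succ m hnm ih =>
    intro v hv hvP
    have hq := (step (chain s0 m)).hq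
    have hvP : v ∈ ((chain s0 m).P.append (step (chain s0 m)).q).support := by
      rw [← hq]; exact hvP
    rw [SimpleGraph.Walk.mem_support_append_iff] at hvP
    rcases hvP with h1 | h1
    · exact ih v hv h1
    · exfalso
      have : v ∈ (chain s0 m).W := (step (chain s0 m)).hqW v h1
      have : v ∈ (chain s0 (n + 1)).W := chain_W_mono s0 (n + 1) m hnm this
      exact (step (chain s0 n)).hτU v hv this

lemma ray_mem_spine (i m : ℕ) (h : i + 1 ≤ m) : ray s0 i ∈ (chain s0 m).P.support := by
  rw [ray_eq s0 i m h]
  exact SimpleGraph.Walk.mem_support_iff_exists_getVert.mpr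
    ⟨i, rfl, le_trans (by omega) (chain_len_ge s0 m)⟩

end Assembly

/-- Direction 2 (contrapositive): a countable graph outside the Schmidt closure contains a comb
with all teeth in `Vstar G`. -/
lemma hasComb_of_not_inSchmidtClosure (G : SimpleGraph V)
    (hG : ¬ InSchmidtClosure Wclass.{u} G) : HasCombWithTeethIn G (Vstar G) := by
  classical
  have hbad : ¬ InSchmidtClosure Wclass.{u} (G.induce (Set.univ : Set V)) := fun h =>
    hG (inSchmidtClosure_iso (induceUnivIso G) h)
  have hACuniv : AlmostClosed G Set.univ ∅ := fun v _ u _ => Or.inl trivial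
  obtain ⟨U, hUsub, hUne, hUbad, hUconn, hUAC, _⟩ :=
    exists_bad_fragment G hbad hACuniv Set.finite_empty
  obtain ⟨x0, hx0⟩ := hUne
  set s0 : Stage G x0 :=
    { W := U
      Fl := ∅ ∪ ∅
      x := x0
      P := SimpleGraph.Walk.nil
      hx := hx0
      hP := SimpleGraph.Walk.IsPath.nil
      hI2 := by
        intro v hv _
        simp only [SimpleGraph.Walk.support_nil, List.mem_singleton] at hv
        exact hv
      hBad := hUbad
      hConn := hUconn
      hFfin := Set.finite_empty.union Set.finite_empty
      hAC := hUAC } with hs0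
  refine ⟨ray s0, kk s0, fun n => (step (chain s0 n)).t,
    fun n => ((step (chain s0 n)).τ).copy (ray_kk s0 n).symm rfl,
    ray_inj s0, ray_adj s0, kk_mono s0, fun n => (step (chain s0 n)).ht, ?_, ?_, ?_⟩
  · intro n
    rw [SimpleGraph.Walk.isPath_copy]
    exact (step (chain s0 n)).hτpath
  · intro m n hmn v hvm
    rw [SimpleGraph.Walk.support_copy] at hvm ⊢
    rcases Nat.lt_or_ge m n with h | h
    · exact tooth_disjoint s0 m n h v hvm
    · have hnm : n < m := by omega
      intro hvn
      exact tooth_disjoint s0 n m hnm v hvn hvm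
  · intro n v hv hex
    rw [SimpleGraph.Walk.support_copy] at hv
    obtain ⟨i, hi⟩ := hex
    set m : ℕ := max (i + 1) (n + 1) with hm
    have hvm : v ∈ (chain s0 m).P.support := by
      rw [hi]
      exact ray_mem_spine s0 i m (le_max_left _ _)
    have := tooth_meets_spine s0 n m (le_max_right _ _) v hv hvm
    rw [this, ray_kk s0 n]

/-- The main theorem. -/
theorem main_iff {V : Type u} [Countable V] (G : SimpleGraph V) :
    InSchmidtClosure Wclass.{u} G ↔ ¬ HasCombWithTeethIn G (Vstar G) := by
  constructor
  · rintro ⟨μ, hμ⟩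
    exact no_comb_of_schmidtLevel μ V G hμ
  · intro h
    by_contra hG
    exact h (hasComb_of_not_inSchmidtClosure G hG)

end SchmidtAux


/-- A countable graph lies in the Schmidt closure of 𝒲 iff it contains no comb with all its
teeth in `V*(G)`. -/
theorem countable_inSchmidtClosure_Wclass_iff {V : Type u} [Countable V] (G : SimpleGraph V) :
    InSchmidtClosure Wclass.{u} G ↔ ¬ HasCombWithTeethIn G (Vstar G) := by
  exact SchmidtAux.main_iff G
end
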